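/- arXiv:1307.1524 — 12 statements merged into one kernel-verified Lean document; each statement's English description precedes it below -/
import Mathlib

section
/- Let N ≥ 2 be an integer. For every real number y ≥ 0 with y ≠ 1 one has ((N−1)·(1 − y^(N+1)) − (N+1)·y·(1 − y^(N−1))) / (1 − y) > 0. -/
/-- For an integer `N ≥ 2` and real `y ≥ 0` with `y ≠ 1`, the quantity
`((N−1)·(1 − y^(N+1)) − (N+1)·y·(1 − y^(N−1))) / (1 − y)` is strictly positive. -/
theorem stmt_1 (N : ℕ) (hN : 2 ≤ N) (y : ℝ) (hy : 0 ≤ y) (hy1 : y ≠ 1) :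
    0 < (((N : ℝ) - 1) * (1 - y ^ (N + 1)) - ((N : ℝ) + 1) * y * (1 - y ^ (N - 1))) / (1 - y) := by
  have h1N : 1 ≤ N := by omega
  have hsub : (1:ℝ) - y ≠ 0 := sub_ne_zero.mpr (Ne.symm hy1)
  -- each term of the sum is nonneg
  have hterm : ∀ k, 0 ≤ (1 - y ^ k) * (1 - y ^ (N - k)) := by
    intro k
    rcases le_total y 1 with h | h
    · exact mul_nonneg (by nlinarith [pow_le_one₀ hy h (n := k)])
        (by nlinarith [pow_le_one₀ hy h (n := N - k)])
    · have h1 := sub_nonneg.mpr (one_le_pow₀ h (n := k))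
      have h2 := sub_nonneg.mpr (one_le_pow₀ h (n := N - k))
      nlinarith [mul_nonneg h1 h2]
  -- the term at k = 1 is positive
  have hterm1 : 0 < (1 - y ^ 1) * (1 - y ^ (N - 1)) := by
    rcases lt_or_gt_of_ne hy1 with h | h
    · have h1 : y ^ (N - 1) < 1 := pow_lt_one₀ hy h (by omega)
      have : y ^ 1 < 1 := by simpa using h
      nlinarith
    · have h1 : 1 < y ^ (N - 1) := one_lt_pow₀ h (by omega)
      have : 1 < y ^ 1 := by simpa using h
      nlinarith
  have hQpos : 0 < ∑ k ∈ Finset.Ico 1 N, (1 - y ^ k) * (1 - y ^ (N - k)) :=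
    Finset.sum_pos' (fun k _ => hterm k)
      ⟨1, Finset.mem_Ico.mpr ⟨le_refl 1, by omega⟩, hterm1⟩
  -- geometric sum identity
  have hgeom : (1 - y) * (∑ i ∈ Finset.range N, y ^ i) = 1 - y ^ N := by
    have h := geom_sum_mul y N
    linear_combination -h
  -- sum over Ico 1 N
  have hIco : ∑ k ∈ Finset.Ico 1 N, y ^ k = (∑ i ∈ Finset.range N, y ^ i) - 1 := by
    rw [Finset.sum_Ico_eq_sub _ h1N]
    simp
  -- reflection
  have hrefl : ∑ k ∈ Finset.Ico 1 N, y ^ (N - k) = ∑ k ∈ Finset.Ico 1 N, y ^ k := by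
    refine Finset.sum_nbij' (fun k => N - k) (fun k => N - k) ?_ ?_ ?_ ?_ ?_
    · intro a ha; simp only [Finset.mem_Ico] at *; omega
    · intro a ha; simp only [Finset.mem_Ico] at *; omega
    · intro a ha; simp only [Finset.mem_Ico] at *; omega
    · intro a ha; simp only [Finset.mem_Ico] at *; omega
    · intro a ha; rfl
  -- compute the sum
  have hQ : ∑ k ∈ Finset.Ico 1 N, (1 - y ^ k) * (1 - y ^ (N - k))
      = ((N:ℝ) - 1) * (1 + y ^ N) - 2 * ((∑ i ∈ Finset.range N, y ^ i) - 1) := by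
    have e : ∀ k ∈ Finset.Ico 1 N,
        (1 - y ^ k) * (1 - y ^ (N - k)) = (1 + y ^ N) - y ^ k - y ^ (N - k) := by
      intro k hk
      simp only [Finset.mem_Ico] at hk
      have hkN : y ^ k * y ^ (N - k) = y ^ N := by
        rw [← pow_add]; congr 1; omega
      nlinarith [hkN]
    rw [Finset.sum_congr rfl e, Finset.sum_sub_distrib, Finset.sum_sub_distrib,
      Finset.sum_const, hrefl, hIco, Nat.card_Ico]
    have : ((N - 1 : ℕ) : ℝ) = (N : ℝ) - 1 := by
      push_cast [h1N]; ring
    rw [nsmul_eq_mul, this]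
    ring
  -- the key factorization
  obtain ⟨M, rfl⟩ : ∃ M, N = M + 2 := ⟨N - 2, by omega⟩
  have key : ((M + 2 : ℝ) - 1) * (1 - y ^ (M + 2 + 1)) - ((M + 2 : ℝ) + 1) * y * (1 - y ^ (M + 2 - 1))
      = (1 - y) * ∑ k ∈ Finset.Ico 1 (M + 2), (1 - y ^ k) * (1 - y ^ (M + 2 - k)) := by
    rw [hQ]
    have h1 : M + 2 - 1 = M + 1 := rfl
    rw [h1]
    push_cast
    linear_combination (2 : ℝ) * hgeom
  push_cast at key ⊢
  rw [key, mul_div_cancel_left₀ _ hsub]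
  exact hQpos
end

section
/- Let a > 0 be a real number and N ≥ 2 an integer, and define g : ℝ → ℝ by g(x) = 1 − (1 − a·x)/(1 − (a·x)^N) when a·x ≠ 1 and g(x) = (N−1)/N when a·x = 1. Then g is strictly monotonically increasing on the interval [0, ∞). -/
/-- For a real `a > 0` and integer `N ≥ 2`, the map
`g(x) = 1 − (1 − a·x)/(1 − (a·x)^N)` for `a·x ≠ 1`, extended by `g(x) = (N−1)/N`
at `a·x = 1`, is strictly monotonically increasing on `[0, ∞)`. -/
theorem stmt_2 (a : ℝ) (ha : 0 < a) (N : ℕ) (hN : 2 ≤ N) (g : ℝ → ℝ)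
    (hg : ∀ x : ℝ, g x = if a * x = 1 then ((N : ℝ) - 1) / N
      else 1 - (1 - a * x) / (1 - (a * x) ^ N)) :
    StrictMonoOn g (Set.Ici (0 : ℝ)) := by
  have hNpos : (0:ℕ) < N := by omega
  have hSpos : ∀ t : ℝ, 0 ≤ t → 0 < ∑ k ∈ Finset.range N, t ^ k := by
    intro t ht
    apply Finset.sum_pos' (fun i _ => pow_nonneg ht i)
    exact ⟨0, Finset.mem_range.2 hNpos, by simp⟩
  have key : ∀ x : ℝ, 0 ≤ x → g x = 1 - (∑ k ∈ Finset.range N, (a*x) ^ k)⁻¹ := by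
    intro x hx
    rw [hg]
    by_cases h : a * x = 1
    · rw [if_pos h, h]
      simp only [one_pow, Finset.sum_const, Finset.card_range, nsmul_eq_mul, mul_one]
      have : (N:ℝ) ≠ 0 := Nat.cast_ne_zero.2 (by omega)
      field_simp
    · rw [if_neg h]
      set t := a * x with ht
      have h1 : (1 - t) * ∑ k ∈ Finset.range N, t ^ k = 1 - t ^ N := by
        have := geom_sum_mul t N
        ring_nf
        ring_nf at this
        linarith
      have hS := hSpos t (mul_nonneg ha.le hx)
      have h1t : (1:ℝ) - t ≠ 0 := sub_ne_zero.2 (Ne.symm h)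
      rw [← h1, div_mul_cancel_left₀ h1t]
  intro x hx y hy hxy
  rw [key x hx, key y hy]
  have hSx := hSpos (a*x) (mul_nonneg ha.le hx)
  have hSlt : ∑ k ∈ Finset.range N, (a*x) ^ k < ∑ k ∈ Finset.range N, (a*y) ^ k := by
    apply Finset.sum_lt_sum
    · intro i _
      exact pow_le_pow_left₀ (mul_nonneg ha.le hx)
        (mul_le_mul_of_nonneg_left hxy.le ha.le) i
    · refine ⟨1, Finset.mem_range.2 (by omega), ?_⟩
      simpa using mul_lt_mul_of_pos_left hxy ha
  have := inv_strictAnti₀ hSx hSlt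
  linarith
end

section
/- Let a > 0 be a real number and N ≥ 2 an integer, and define g : ℝ → ℝ by g(x) = 1 − (1 − a·x)/(1 − (a·x)^N) when a·x ≠ 1 and g(x) = (N−1)/N when a·x = 1. Then g is strictly concave on the interval [0, ∞). -/
open Finset

lemma key_identity (N : ℕ) (t : ℝ) :
    ∑ j ∈ range N, ∑ k ∈ range N,
      (2*(j:ℝ)*(k:ℝ) - (k:ℝ)*((k:ℝ)-1)) * t^(j+k)
    = (N:ℝ) * ∑ i ∈ range N, ((i:ℝ)+1)*((N:ℝ)-1-(i:ℝ)) * t^(N+i) := by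
  induction N with
  | zero => simp
  | succ n ih =>
      have hshift : ∑ r ∈ range (n+1), (r:ℝ)*((n:ℝ)+1-(r:ℝ))*t^(n+r)
          = ∑ i ∈ range (n+1), ((i:ℝ)+1)*(((n:ℝ)+1)-1-(i:ℝ)) * t^((n+1)+i) := by
        rw [Finset.sum_range_succ', Finset.sum_range_succ]
        simp only [Nat.cast_zero, Nat.cast_add, Nat.cast_one]
        have h0 : (0:ℝ) * ((n:ℝ)+1-0) * t^(n+0) = 0 := by ring
        have hn : ((n:ℝ)+1)*((n:ℝ)+1-1-(n:ℝ)) * t^((n+1)+n) = 0 := by ring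
        rw [h0, hn, add_zero, add_zero]
        exact Finset.sum_congr rfl fun i _ => by
          rw [show n+1+i = n+(i+1) from by omega]; ring
      rw [show ((n+1:ℕ):ℝ) * ∑ i ∈ range (n+1), ((i:ℝ)+1)*(((n+1:ℕ):ℝ)-1-(i:ℝ)) * t^((n+1)+i)
          = ((n:ℝ)+1) * ∑ r ∈ range (n+1), (r:ℝ)*((n:ℝ)+1-(r:ℝ))*t^(n+r) from by
        push_cast [hshift]; ring]
      rw [Finset.sum_range_succ]
      conv_lhs =>
        rw [Finset.sum_congr rfl (fun j (_ : j ∈ range n) => Finset.sum_range_succ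
          (fun k => (2*(j:ℝ)*(k:ℝ) - (k:ℝ)*((k:ℝ)-1)) * t^(j+k)) n)]
      rw [Finset.sum_add_distrib, ih, Finset.sum_range_succ (n := n)
        (f := fun k => (2*((n:ℕ):ℝ)*(k:ℝ) - (k:ℝ)*((k:ℝ)-1)) * t^(n+k))]
      rw [Finset.sum_range_succ (n := n)
        (f := fun r => ((r:ℝ)*((n:ℝ)+1-(r:ℝ))*t^(n+r)))]
      rw [mul_add, Finset.mul_sum, Finset.mul_sum]
      have hmerge : ∑ i ∈ range n, (n:ℝ) * (((i:ℝ)+1)*((n:ℝ)-1-(i:ℝ)) * t^(n+i))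
          + ∑ j ∈ range n, (2*(j:ℝ)*((n:ℕ):ℝ) - ((n:ℕ):ℝ)*(((n:ℕ):ℝ)-1)) * t^(j+n)
          + ∑ k ∈ range n, (2*((n:ℕ):ℝ)*(k:ℝ) - (k:ℝ)*((k:ℝ)-1)) * t^(n+k)
          = ∑ r ∈ range n, ((n:ℝ)+1) * ((r:ℝ)*((n:ℝ)+1-(r:ℝ))*t^(n+r)) := by
        rw [← Finset.sum_add_distrib, ← Finset.sum_add_distrib]
        refine Finset.sum_congr rfl fun i _ => ?_
        rw [show i+n = n+i from by omega]
        ring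
      linear_combination hmerge

lemma key_pos (N : ℕ) (hN : 2 ≤ N) (t : ℝ) (ht : 0 < t) :
    0 < ∑ j ∈ range N, ∑ k ∈ range N,
      (2*(j:ℝ)*(k:ℝ) - (k:ℝ)*((k:ℝ)-1)) * t^(j+k) := by
  rw [key_identity]
  apply mul_pos (by positivity)
  apply Finset.sum_pos'
  · intro i hi
    have hi' : (i:ℝ) + 1 ≤ (N:ℝ) := by exact_mod_cast Finset.mem_range.1 hi
    exact mul_nonneg (mul_nonneg (by positivity) (by linarith)) (by positivity)
  · refine ⟨0, Finset.mem_range.2 (by omega), ?_⟩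
    have h1 : (0:ℝ) < (N:ℝ) - 1 := by
      have : (2:ℝ) ≤ (N:ℝ) := by exact_mod_cast hN
      linarith
    have h2 : (0:ℝ) < t^(N+0) := pow_pos ht _
    push_cast
    nlinarith

lemma aux_ineq_final (N : ℕ) (hN : 2 ≤ N) (t : ℝ) (ht : 0 < t) :
    (∑ k ∈ range N, (k:ℝ) * (((k-1:ℕ):ℝ) * t^(k-1-1))) * (∑ k ∈ range N, t^k)
      < 2 * (∑ k ∈ range N, (k:ℝ) * t^(k-1))^2 := by
  have hB : t * ∑ k ∈ range N, (k:ℝ) * t^(k-1) = ∑ k ∈ range N, (k:ℝ) * t^k := by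
    rw [Finset.mul_sum]
    refine Finset.sum_congr rfl fun k _ => ?_
    match k with
    | 0 => simp
    | (m+1) => rw [show m+1-1 = m from rfl, pow_succ]; ring
  have hC : t^2 * ∑ k ∈ range N, (k:ℝ) * (((k-1:ℕ):ℝ) * t^(k-1-1))
      = ∑ k ∈ range N, (k:ℝ)*((k:ℝ)-1) * t^k := by
    rw [Finset.mul_sum]
    refine Finset.sum_congr rfl fun k _ => ?_
    match k with
    | 0 => simp
    | 1 => simp
    | (m+2) =>
        rw [show m+2-1 = m+1 from rfl, show m+1-1 = m from rfl]
        push_cast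
        rw [show m+2 = m+1+1 from rfl, pow_succ, pow_succ]
        ring
  have hexp : (∑ k ∈ range N, (k:ℝ) * t^k)^2 = ∑ j ∈ range N, ∑ k ∈ range N,
      ((j:ℝ)*(k:ℝ)) * t^(j+k) := by
    rw [sq, Finset.sum_mul_sum]
    exact Finset.sum_congr rfl fun j _ => Finset.sum_congr rfl fun k _ => by
      rw [pow_add]; ring
  have hexp2 : (∑ k ∈ range N, t^k) * (∑ k ∈ range N, (k:ℝ)*((k:ℝ)-1) * t^k)
      = ∑ j ∈ range N, ∑ k ∈ range N, ((k:ℝ)*((k:ℝ)-1)) * t^(j+k) := by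
    rw [Finset.sum_mul_sum]
    exact Finset.sum_congr rfl fun j _ => Finset.sum_congr rfl fun k _ => by
      rw [pow_add]; ring
  have hdiff : 2 * (∑ k ∈ range N, (k:ℝ) * t^k)^2
      - (∑ k ∈ range N, t^k) * (∑ k ∈ range N, (k:ℝ)*((k:ℝ)-1) * t^k)
      = ∑ j ∈ range N, ∑ k ∈ range N,
        (2*(j:ℝ)*(k:ℝ) - (k:ℝ)*((k:ℝ)-1)) * t^(j+k) := by
    rw [hexp, hexp2, Finset.mul_sum, ← Finset.sum_sub_distrib]
    refine Finset.sum_congr rfl fun j _ => ?_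
    rw [Finset.mul_sum, ← Finset.sum_sub_distrib]
    exact Finset.sum_congr rfl fun k _ => by ring
  have hk := key_pos N hN t ht
  rw [← hdiff] at hk
  have h2 : t^2 * (2 * (∑ k ∈ range N, (k:ℝ) * t^(k-1))^2
      - (∑ k ∈ range N, (k:ℝ) * (((k-1:ℕ):ℝ) * t^(k-1-1))) * (∑ k ∈ range N, t^k))
      = 2 * (∑ k ∈ range N, (k:ℝ) * t^k)^2
      - (∑ k ∈ range N, t^k) * (∑ k ∈ range N, (k:ℝ)*((k:ℝ)-1) * t^k) := by
    rw [← hB, ← hC]; ring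
  rw [← h2] at hk
  nlinarith [hk, mul_pos ht ht]


lemma aux_P_pos' (N : ℕ) (hN : 1 ≤ N) (t : ℝ) (ht : 0 ≤ t) :
    0 < ∑ k ∈ range N, t^k := by
  apply Finset.sum_pos' (fun k _ => pow_nonneg ht k)
  exact ⟨0, Finset.mem_range.2 (by omega), by norm_num⟩

lemma aux_comp_mul' {c : ℝ → ℝ} {c' : ℝ} (a x : ℝ) (h : HasDerivAt c c' (a*x)) :
    HasDerivAt (fun y => c (a*y)) (c' * a) x := by
  have hax : HasDerivAt (fun y : ℝ => a*y) a x := by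
    simpa using (hasDerivAt_id x).const_mul a
  exact h.comp x hax

lemma aux_hasDerivAt_P' (N : ℕ) (t : ℝ) :
    HasDerivAt (fun s : ℝ => ∑ k ∈ range N, s^k)
      (∑ k ∈ range N, (k:ℝ) * t^(k-1)) t :=
  HasDerivAt.fun_sum fun k _ => hasDerivAt_pow k t

lemma aux_hasDerivAt_P1' (N : ℕ) (t : ℝ) :
    HasDerivAt (fun s : ℝ => ∑ k ∈ range N, (k:ℝ) * s^(k-1))
      (∑ k ∈ range N, (k:ℝ) * (((k-1:ℕ):ℝ) * t^(k-1-1))) t :=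
  HasDerivAt.fun_sum fun k _ => (hasDerivAt_pow (k-1) t).const_mul (k:ℝ)

/-- For a real `a > 0` and integer `N ≥ 2`, the map
`g(x) = 1 − (1 − a·x)/(1 − (a·x)^N)` for `a·x ≠ 1`, extended by `g(x) = (N−1)/N`
at `a·x = 1`, is strictly concave on `[0, ∞)`. -/
theorem stmt_3 (a : ℝ) (ha : 0 < a) (N : ℕ) (hN : 2 ≤ N) (g : ℝ → ℝ)
    (hg : ∀ x : ℝ, g x = if a * x = 1 then ((N : ℝ) - 1) / N
      else 1 - (1 - a * x) / (1 - (a * x) ^ N)) :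
    StrictConcaveOn ℝ (Set.Ici (0 : ℝ)) g := by
  have hN1 : 1 ≤ N := by omega
  set F : ℝ → ℝ := fun y => 1 - (∑ k ∈ range N, (a*y)^k)⁻¹ with hF
  have hEqOn : ∀ x ∈ Set.Ici (0:ℝ), g x = F x := by
    intro x hx
    have ht : 0 ≤ a*x := mul_nonneg ha.le hx
    have hp := aux_P_pos' N hN1 (a*x) ht
    rw [hg]
    by_cases h1 : a*x = 1
    · rw [if_pos h1, hF]
      simp only [h1, one_pow, Finset.sum_const, card_range, nsmul_eq_mul, mul_one]
      have hN0 : (N:ℝ) ≠ 0 := Nat.cast_ne_zero.2 (by omega)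
      field_simp
    · rw [if_neg h1, hF]
      have h2 : 1 - (a*x)^N = (1-(a*x)) * ∑ k ∈ range N, (a*x)^k := by
        linear_combination geom_sum_mul (a*x) N
      rw [h2, div_mul_cancel_left₀ (sub_ne_zero.2 fun h => h1 (by linarith))]
  -- continuity
  have hc1 : Continuous fun y : ℝ => ∑ k ∈ range N, (a*y)^k :=
    continuous_finset_sum _ fun k _ => (continuous_const.mul continuous_id).pow k
  have hcont : ContinuousOn g (Set.Ici (0:ℝ)) := by
    refine ContinuousOn.congr ?_ hEqOn
    exact continuousOn_const.sub (hc1.continuousOn.inv₀ fun x hx =>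
      (aux_P_pos' N hN1 (a*x) (mul_nonneg ha.le hx)).ne')
  -- derivative of g on Ioi 0
  have hd : ∀ y ∈ Set.Ioi (0:ℝ), HasDerivAt g
      (a * (∑ k ∈ range N, (k:ℝ)*(a*y)^(k-1)) / (∑ k ∈ range N, (a*y)^k)^2) y := by
    intro y hy
    have hty : 0 < a*y := mul_pos ha hy
    have hp := aux_P_pos' N hN1 (a*y) hty.le
    have hP' := aux_comp_mul' a y (aux_hasDerivAt_P' N (a*y))
    have hinv := hP'.inv hp.ne'
    have hFd := (hasDerivAt_const y (1:ℝ)).sub hinv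
    have hFg : g =ᶠ[nhds y] F :=
      Filter.eventuallyEq_of_mem (Ioi_mem_nhds hy) fun z hz => hEqOn z (Set.mem_Ici.2 (le_of_lt (Set.mem_Ioi.1 hz)))
    have hgd := hFd.congr_of_eventuallyEq hFg
    refine hgd.congr_deriv ?_
    ring
  apply strictConcaveOn_of_deriv2_neg (convex_Ici 0) hcont
  intro x hx
  rw [interior_Ici] at hx
  have ht : 0 < a*x := mul_pos ha hx
  have hp := aux_P_pos' N hN1 (a*x) ht.le
  have hev : deriv g =ᶠ[nhds x] fun y =>
      a * (∑ k ∈ range N, (k:ℝ)*(a*y)^(k-1)) / (∑ k ∈ range N, (a*y)^k)^2 :=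
    Filter.eventuallyEq_of_mem (Ioi_mem_nhds hx) fun y hy => (hd y hy).deriv
  have h2it : deriv^[2] g x = deriv (deriv g) x := rfl
  rw [h2it, hev.deriv_eq]
  -- compute second derivative
  have hq := (aux_comp_mul' a x (aux_hasDerivAt_P1' N (a*x))).const_mul a
  have hPx' := aux_comp_mul' a x (aux_hasDerivAt_P' N (a*x))
  have hden := hPx'.fun_pow 2
  have hdiv := hq.fun_div hden (pow_ne_zero 2 hp.ne')
  rw [hdiv.deriv]
  apply div_neg_of_neg_of_pos
  · have hlt := aux_ineq_final N hN (a*x) ht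
    have hfac : a * ((∑ k ∈ range N, (k:ℝ) * (((k-1:ℕ):ℝ) * (a*x)^(k-1-1))) * a) *
          (∑ k ∈ range N, (a*x)^k)^2
        - a * (∑ k ∈ range N, (k:ℝ)*(a*x)^(k-1)) *
          (((2:ℕ):ℝ) * (∑ k ∈ range N, (a*x)^k)^(2-1) * ((∑ k ∈ range N, (k:ℝ)*(a*x)^(k-1)) * a))
        = a^2 * (∑ k ∈ range N, (a*x)^k) *
          ((∑ k ∈ range N, (k:ℝ) * (((k-1:ℕ):ℝ) * (a*x)^(k-1-1))) * (∑ k ∈ range N, (a*x)^k)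
            - 2 * (∑ k ∈ range N, (k:ℝ)*(a*x)^(k-1))^2) := by
      norm_num
      ring
    rw [hfac]
    exact mul_neg_of_pos_of_neg (by positivity) (by linarith)
  · positivity
end

section
/- Let a > 0 be a real number and N ≥ 2 an integer. Then, as x tends to 1/a within the punctured set {x : a·x ≠ 1}: (i) the first derivative expression a·((N−1)(a·x)^N + 1 − N·(a·x)^(N−1)) / (1 − (a·x)^N)² tends to a·(N−1)/(2N); and (ii) the second derivative expression −a²·N·(a·x)^(N−2)·((1 − a·x)/(1 − (a·x)^N)³)·((N−1)(1 − (a·x)^(N+1))/(1 − a·x) − (a·x)(N+1)(1 − (a·x)^(N−1))/(1 − a·x)) tends to −a²·(N²−1)/(6N). -/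
open Finset

lemma sum1 (n : ℕ) (t : ℝ) :
    (1 - t)^2 * ∑ k ∈ range n, ((k:ℝ)+1) * t^k
      = (n:ℝ) * t^(n+1) + 1 - ((n:ℝ)+1) * t^n := by
  induction n with
  | zero => simp
  | succ m ih =>
    rw [Finset.sum_range_succ]
    push_cast
    push_cast at ih
    linear_combination ih

lemma split3 (m : ℕ) (t : ℝ) :
    ∑ k ∈ range (m+1), ((k:ℝ)+1)*(((m:ℝ)+1)-k)*t^k
      = ∑ k ∈ range m, ((k:ℝ)+1)*((m:ℝ)-k)*t^k
        + ∑ k ∈ range (m+1), ((k:ℝ)+1)*t^k := by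
  have h : ∀ k : ℕ, ((k:ℝ)+1)*(((m:ℝ)+1)-k)*t^k
      = ((k:ℝ)+1)*((m:ℝ)-k)*t^k + ((k:ℝ)+1)*t^k := fun k => by ring
  simp_rw [h, Finset.sum_add_distrib]
  rw [Finset.sum_range_succ (f := fun k => ((k:ℝ)+1)*((m:ℝ)-k)*t^k)]
  simp

lemma sum3 (n : ℕ) (t : ℝ) :
    (1 - t)^3 * ∑ k ∈ range n, ((k:ℝ)+1)*((n:ℝ)-k)*t^k
      = (n:ℝ)*(1 - t^(n+2)) - t*((n:ℝ)+2)*(1 - t^n) := by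
  induction n with
  | zero => simp
  | succ m ih =>
    have hs := split3 m t
    have h1 := sum1 (m+1) t
    push_cast at hs h1 ih ⊢
    rw [hs]
    linear_combination ih + (1-t) * h1

lemma gauss1 (m : ℕ) : ∑ k ∈ range m, ((k:ℝ)+1) = m*(m+1)/2 := by
  induction m with
  | zero => simp
  | succ p ih =>
    rw [Finset.sum_range_succ]
    push_cast at ih ⊢
    linear_combination ih

lemma gauss2 (m : ℕ) :
    ∑ k ∈ range m, ((k:ℝ)+1)*((m:ℝ)-k) = m*(m+1)*(m+2)/6 := by
  induction m with
  | zero => simp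
  | succ p ih =>
    have hs := split3 p 1
    simp only [one_pow, mul_one] at hs
    have hg := gauss1 (p+1)
    push_cast at ih hg ⊢
    rw [hs]
    linear_combination ih + hg

/-- For a real `a > 0` and integer `N ≥ 2`, as `x → 1/a` within `{x : a·x ≠ 1}`:
(i) the first-derivative expression
`a·((N−1)(a·x)^N + 1 − N·(a·x)^(N−1)) / (1 − (a·x)^N)²` tends to `a·(N−1)/(2N)`, and
(ii) the second-derivative expression
`−a²·N·(a·x)^(N−2)·((1 − a·x)/(1 − (a·x)^N)³)·((N−1)(1 − (a·x)^(N+1))/(1 − a·x) −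
(a·x)(N+1)(1 − (a·x)^(N−1))/(1 − a·x))` tends to `−a²·(N²−1)/(6N)`. -/
theorem stmt_5 (a : ℝ) (ha : 0 < a) (N : ℕ) (hN : 2 ≤ N) :
    Filter.Tendsto
      (fun x : ℝ => a * (((N : ℝ) - 1) * (a * x) ^ N + 1 - (N : ℝ) * (a * x) ^ (N - 1))
        / (1 - (a * x) ^ N) ^ 2)
      (nhdsWithin (1 / a) {x : ℝ | a * x ≠ 1}) (nhds (a * ((N : ℝ) - 1) / (2 * N)))
    ∧
    Filter.Tendsto
      (fun x : ℝ => -a ^ 2 * (N : ℝ) * (a * x) ^ (N - 2)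
        * ((1 - a * x) / (1 - (a * x) ^ N) ^ 3)
        * (((N : ℝ) - 1) * (1 - (a * x) ^ (N + 1)) / (1 - a * x)
          - (a * x) * ((N : ℝ) + 1) * (1 - (a * x) ^ (N - 1)) / (1 - a * x)))
      (nhdsWithin (1 / a) {x : ℝ | a * x ≠ 1})
      (nhds (-a ^ 2 * ((N : ℝ) ^ 2 - 1) / (6 * N))) := by
  obtain ⟨n, rfl⟩ : ∃ n, N = n + 2 := ⟨N - 2, by omega⟩
  clear hN
  set l := nhdsWithin (1/a) {x : ℝ | a * x ≠ 1} with hl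
  have hmap : Filter.Tendsto (fun x : ℝ => a * x) l (nhds 1) := by
    have hc : Filter.Tendsto (fun x : ℝ => a * x) (nhds (1/a)) (nhds (a * (1/a))) :=
      (continuous_const.mul continuous_id).tendsto _
    rw [mul_one_div, div_self ha.ne'] at hc
    exact hc.mono_left nhdsWithin_le_nhds
  have hpos : ∀ᶠ x in l, 0 < a * x := hmap.eventually (eventually_gt_nhds zero_lt_one)
  have hne : ∀ᶠ x in l, a * x ≠ 1 := eventually_mem_nhdsWithin
  have hn2 : ((n:ℝ) + 2) ≠ 0 := by positivity
  have hSone : ∑ k ∈ range (n+2), (1:ℝ)^k = (n:ℝ)+2 := by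
    simp only [one_pow, Finset.sum_const, Finset.card_range, nsmul_eq_mul, mul_one]
    norm_cast
  constructor
  · have key : (fun x : ℝ =>
        a * ((↑(n+2) - 1) * (a*x)^(n+2) + 1 - ↑(n+2) * (a*x)^(n+2-1)) / (1-(a*x)^(n+2))^2)
        =ᶠ[l] (fun x : ℝ =>
        a * (∑ k ∈ range (n+1), ((k:ℝ)+1)*(a*x)^k) / (∑ k ∈ range (n+2), (a*x)^k)^2) := by
      filter_upwards [hpos, hne] with x hx hx1
      set t := a*x with ht
      have h1t : (1:ℝ) - t ≠ 0 := sub_ne_zero_of_ne (Ne.symm hx1)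
      have hSt : (0:ℝ) < ∑ k ∈ range (n+2), t^k :=
        Finset.sum_pos (fun i _ => pow_pos hx i) (Finset.nonempty_range_iff.mpr (by omega))
      have hgeom : 1 - t^(n+2) = (1-t) * ∑ k ∈ range (n+2), t^k := by
        have h := geom_sum_mul t (n+2)
        linear_combination h
      have hnum' : ((↑(n+2):ℝ) - 1) * t^(n+2) + 1 - (↑(n+2):ℝ) * t^(n+1)
          = (1-t)^2 * ∑ k ∈ range (n+1), ((k:ℝ)+1)*t^k := by
        have hnum := sum1 (n+1) t
        push_cast at hnum ⊢
        linear_combination -hnum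
      rw [show n+2-1 = n+1 from rfl, hnum', hgeom, mul_pow,
        show a * ((1-t)^2 * ∑ k ∈ range (n+1), ((k:ℝ)+1)*t^k)
          = (1-t)^2 * (a * ∑ k ∈ range (n+1), ((k:ℝ)+1)*t^k) from by ring,
        mul_div_mul_left _ _ (pow_ne_zero 2 h1t)]
    refine Filter.Tendsto.congr' key.symm ?_
    have hc : ContinuousAt
        (fun t : ℝ => a * (∑ k ∈ range (n+1), ((k:ℝ)+1)*t^k) / (∑ k ∈ range (n+2), t^k)^2) 1 := by
      apply ContinuousAt.div
      · fun_prop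
      · fun_prop
      · rw [hSone]; positivity
    have hval : a * ((↑(n+2):ℝ) - 1) / (2*↑(n+2))
        = a * (∑ k ∈ range (n+1), ((k:ℝ)+1)*(1:ℝ)^k) / (∑ k ∈ range (n+2), (1:ℝ)^k)^2 := by
      simp only [one_pow, mul_one, Finset.sum_const, Finset.card_range, nsmul_eq_mul]
      have hg := gauss1 (n+1)
      push_cast at hg
      rw [hg]
      push_cast
      field_simp
      ring
    rw [hval]
    exact hc.tendsto.comp hmap
  · have key : (fun x : ℝ =>
        -a^2 * ↑(n+2) * (a*x)^(n+2-2) * ((1 - a*x)/(1-(a*x)^(n+2))^3)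
          * ((↑(n+2) - 1) * (1-(a*x)^(n+2+1))/(1 - a*x)
            - (a*x) * (↑(n+2) + 1) * (1-(a*x)^(n+2-1))/(1 - a*x)))
        =ᶠ[l] (fun x : ℝ =>
        -a^2 * ((↑(n+2)):ℝ) * (a*x)^n
            * (∑ k ∈ range (n+1), ((k:ℝ)+1)*(((n:ℝ)+1)-k)*(a*x)^k)
            / (∑ k ∈ range (n+2), (a*x)^k)^3) := by
      filter_upwards [hpos, hne] with x hx hx1
      set t := a*x with ht
      have h1t : (1:ℝ) - t ≠ 0 := sub_ne_zero_of_ne (Ne.symm hx1)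
      have hSt : (∑ k ∈ range (n+2), t^k) ≠ 0 :=
        (Finset.sum_pos (fun i _ => pow_pos hx i) (Finset.nonempty_range_iff.mpr (by omega))).ne'
      have hgeom : 1 - t^(n+2) = (1-t) * ∑ k ∈ range (n+2), t^k := by
        have h := geom_sum_mul t (n+2)
        linear_combination h
      have h3' : ((↑(n+2):ℝ) - 1) * (1 - t^(n+2+1)) - t * ((↑(n+2):ℝ) + 1) * (1 - t^(n+1))
          = (1-t)^3 * ∑ k ∈ range (n+1), ((k:ℝ)+1)*(((n:ℝ)+1)-k)*t^k := by
        have h3 := sum3 (n+1) t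
        push_cast at h3 ⊢
        linear_combination -h3
      rw [show n+2-2 = n from rfl, show n+2-1 = n+1 from rfl, div_sub_div_same, h3', hgeom]
      field_simp
    refine Filter.Tendsto.congr' key.symm ?_
    have hc : ContinuousAt
        (fun t : ℝ => -a^2 * ((↑(n+2)):ℝ) * t^n
            * (∑ k ∈ range (n+1), ((k:ℝ)+1)*(((n:ℝ)+1)-k)*t^k)
            / (∑ k ∈ range (n+2), t^k)^3) 1 := by
      apply ContinuousAt.div
      · fun_prop
      · fun_prop
      · rw [hSone]; positivity
    have hval : -a^2 * ((↑(n+2):ℝ)^2 - 1) / (6*↑(n+2))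
        = -a^2 * ((↑(n+2)):ℝ) * (1:ℝ)^n
            * (∑ k ∈ range (n+1), ((k:ℝ)+1)*(((n:ℝ)+1)-k)*(1:ℝ)^k)
            / (∑ k ∈ range (n+2), (1:ℝ)^k)^3 := by
      simp only [one_pow, mul_one, Finset.sum_const, Finset.card_range, nsmul_eq_mul]
      have hg := gauss2 (n+1)
      push_cast at hg
      rw [hg]
      push_cast
      field_simp
      ring
    rw [hval]
    exact hc.tendsto.comp hmap
end

section
/- Let K ≥ 1 and let a ∈ ℝ^K have strictly positive entries a_k > 0, let b ≥ 0 be a real number, and let N ≥ 2 be an integer. Define G : ℝ^K → ℝ by G(x) = 1 − (1 − b − ⟨a,x⟩)/(1 − (b + ⟨a,x⟩)^N) when b + ⟨a,x⟩ ≠ 1, and G(x) = (N−1)/N when b + ⟨a,x⟩ = 1, where ⟨a,x⟩ = Σ_k a_k·x_k. Then on the nonnegative orthant {x ∈ ℝ^K : x_k ≥ 0 for all k}, G is strictly increasing in each coordinate (if x ≤ y coordinatewise and x_k < y_k for some k, then G(x) < G(y)) and G is concave. -/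
open Finset

private lemma aux_pow_pair {u v : ℝ} (hu : 0 ≤ u) (huv : u ≤ v) {q r : ℕ} (hqr : q ≤ r) :
    v ^ q * u ^ r ≤ u ^ q * v ^ r := by
  obtain ⟨d, rfl⟩ := Nat.exists_eq_add_of_le hqr
  have h1 : u ^ d ≤ v ^ d := pow_le_pow_left₀ hu huv d
  have h2 : (0:ℝ) ≤ u ^ q * v ^ q :=
    mul_nonneg (pow_nonneg hu q) (pow_nonneg (hu.trans huv) q)
  have h3 := mul_le_mul_of_nonneg_left h1 h2
  calc v ^ q * u ^ (q + d) = u ^ q * v ^ q * u ^ d := by rw [pow_add]; ring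
    _ ≤ u ^ q * v ^ q * v ^ d := h3
    _ = u ^ q * v ^ (q + d) := by rw [pow_add]; ring

private lemma aux_cheb {u v : ℝ} (hu : 0 ≤ u) (huv : u ≤ v) {m n : ℕ} (hmn : m ≤ n) :
    (∑ i ∈ range m, v ^ i) * (∑ i ∈ range n, u ^ i) ≤
      (∑ i ∈ range m, u ^ i) * (∑ i ∈ range n, v ^ i) := by
  have hsplit : ∀ t : ℝ, ∑ i ∈ range n, t ^ i
      = (∑ i ∈ range m, t ^ i) + ∑ i ∈ Ico m n, t ^ i := by
    intro t
    rw [range_eq_Ico, ← Finset.sum_Ico_consecutive _ (Nat.zero_le m) hmn, ← range_eq_Ico]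
  rw [hsplit u, hsplit v, mul_add, mul_add]
  have key : (∑ i ∈ range m, v ^ i) * (∑ i ∈ Ico m n, u ^ i) ≤
      (∑ i ∈ range m, u ^ i) * (∑ i ∈ Ico m n, v ^ i) := by
    rw [Finset.sum_mul_sum, Finset.sum_mul_sum]
    refine Finset.sum_le_sum fun q hq => Finset.sum_le_sum fun r hr => ?_
    exact aux_pow_pair hu huv ((Finset.mem_range.1 hq).le.trans (Finset.mem_Ico.1 hr).1)
  have e : (∑ i ∈ range m, v ^ i) * (∑ i ∈ range m, u ^ i)
      = (∑ i ∈ range m, u ^ i) * (∑ i ∈ range m, v ^ i) := mul_comm _ _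
  linarith

private def auxD (m : ℕ) (x y : ℝ) : ℝ := ∑ p ∈ range m, x ^ p * ∑ j ∈ range (m - p), y ^ j

private lemma auxD_succ (m : ℕ) (x y : ℝ) :
    auxD (m + 1) x y = auxD m x y + ∑ p ∈ range (m + 1), x ^ p * y ^ (m - p) := by
  unfold auxD
  rw [Finset.sum_range_succ (fun p => x ^ p * ∑ j ∈ range (m + 1 - p), y ^ j) m,
      Finset.sum_range_succ (fun p => x ^ p * y ^ (m - p)) m]
  have h1 : ∀ p ∈ range m, x ^ p * ∑ j ∈ range (m + 1 - p), y ^ j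
      = x ^ p * ∑ j ∈ range (m - p), y ^ j + x ^ p * y ^ (m - p) := by
    intro p hp
    have hpm : p < m := Finset.mem_range.1 hp
    have h : m + 1 - p = (m - p) + 1 := by omega
    rw [h, Finset.sum_range_succ, mul_add]
  rw [Finset.sum_congr rfl h1, Finset.sum_add_distrib]
  have h2 : m + 1 - m = 1 := by omega
  have h3 : m - m = 0 := by omega
  rw [h2, h3]
  simp [Finset.sum_range_one]
  ring

private lemma aux_reflect (m : ℕ) (x y : ℝ) :
    ∑ p ∈ range (m + 1), x ^ p * y ^ (m - p)
      = ∑ p ∈ range (m + 1), y ^ p * x ^ (m - p) := by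
  rw [← Finset.sum_range_reflect (fun p => y ^ p * x ^ (m - p)) (m + 1)]
  refine Finset.sum_congr rfl fun p hp => ?_
  have hpm : p ≤ m := Nat.lt_succ_iff.1 (Finset.mem_range.1 hp)
  have h1 : m + 1 - 1 - p = m - p := by omega
  rw [h1, Nat.sub_sub_self hpm, mul_comm]

private lemma auxD_symm (m : ℕ) (x y : ℝ) : auxD m x y = auxD m y x := by
  induction m with
  | zero => simp [auxD]
  | succ m ih => rw [auxD_succ, auxD_succ, ih, aux_reflect]

private lemma auxS_sub (m : ℕ) (x y : ℝ) :
    (∑ i ∈ range (m + 1), y ^ i) - (∑ i ∈ range (m + 1), x ^ i)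
      = (y - x) * auxD m x y := by
  induction m with
  | zero => simp [auxD]
  | succ m ih =>
    have e1 : ∑ i ∈ range (m + 1 + 1), y ^ i = (∑ i ∈ range (m + 1), y ^ i) + y ^ (m + 1) :=
      Finset.sum_range_succ _ _
    have e2 : ∑ i ∈ range (m + 1 + 1), x ^ i = (∑ i ∈ range (m + 1), x ^ i) + x ^ (m + 1) :=
      Finset.sum_range_succ _ _
    have e3 := auxD_succ m x y
    have e4 := aux_reflect m x y
    have hgeom : (∑ p ∈ range (m + 1), y ^ p * x ^ (m - p)) * (y - x)
        = y ^ (m + 1) - x ^ (m + 1) := by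
      have h := geom_sum₂_mul y x (m + 1)
      simpa using h
    linear_combination e1 - e2 + ih - hgeom - (y - x) * e3 - (y - x) * e4

private lemma auxS_pos {t : ℝ} (ht : 0 ≤ t) {n : ℕ} (hn : 1 ≤ n) :
    0 < ∑ i ∈ range n, t ^ i := by
  have h := Finset.single_le_sum (f := fun i => t ^ i)
    (fun i _ => pow_nonneg ht i) (Finset.mem_range.2 (by omega : 0 < n))
  simpa using lt_of_lt_of_le one_pos (by simpa using h)

private lemma auxS_lt {s t : ℝ} (hs : 0 ≤ s) (hst : s < t) {n : ℕ} (hn : 2 ≤ n) :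
    ∑ i ∈ range n, s ^ i < ∑ i ∈ range n, t ^ i :=
  Finset.sum_lt_sum (fun i _ => pow_le_pow_left₀ hs hst.le i)
    ⟨1, Finset.mem_range.2 (by omega), by simpa using hst⟩

private lemma auxD_mono2 {c z z' : ℝ} (hc : 0 ≤ c) (hz : 0 ≤ z) (hzz : z ≤ z')
    {m n : ℕ} (hmn : m ≤ n) :
    auxD m c z' * (∑ i ∈ range n, z ^ i) ≤ auxD m c z * (∑ i ∈ range n, z' ^ i) := by
  unfold auxD
  rw [Finset.sum_mul, Finset.sum_mul]
  refine Finset.sum_le_sum fun p hp => ?_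
  rw [mul_assoc, mul_assoc]
  exact mul_le_mul_of_nonneg_left
    (aux_cheb hz hzz (le_trans (Nat.sub_le m p) hmn)) (pow_nonneg hc p)

private lemma aux_concave (N : ℕ) (hN : 2 ≤ N) :
    ConcaveOn ℝ (Set.Ici (0:ℝ)) (fun t => 1 - (∑ i ∈ range N, t ^ i)⁻¹) := by
  rw [concaveOn_iff_slope_anti_adjacent]
  refine ⟨convex_Ici 0, ?_⟩
  intro x y z hx hz hxy hyz
  have hx0 : (0:ℝ) ≤ x := hx
  have hy0 : (0:ℝ) ≤ y := hx0.trans hxy.le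
  have hz0 : (0:ℝ) ≤ z := hy0.trans hyz.le
  obtain ⟨m, rfl⟩ : ∃ m, N = m + 1 := ⟨N - 1, by omega⟩
  set Sx := ∑ i ∈ range (m + 1), x ^ i with hSxdef
  set Sy := ∑ i ∈ range (m + 1), y ^ i with hSydef
  set Sz := ∑ i ∈ range (m + 1), z ^ i with hSzdef
  have hSx : 0 < Sx := auxS_pos hx0 (by omega)
  have hSy : 0 < Sy := auxS_pos hy0 (by omega)
  have hSz : 0 < Sz := auxS_pos hz0 (by omega)
  have hdxy : Sy - Sx = (y - x) * auxD m x y := auxS_sub m x y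
  have hdyz : Sz - Sy = (z - y) * auxD m y z := auxS_sub m y z
  have hA : auxD m y z * Sy ≤ auxD m y y * Sz := auxD_mono2 hy0 hy0 hyz.le (by omega)
  have hB : auxD m y y * Sx ≤ auxD m y x * Sy := auxD_mono2 hy0 hx0 hxy.le (by omega)
  have hB' : auxD m y x = auxD m x y := auxD_symm m y x
  have h1 : auxD m y z * Sx * Sy ≤ auxD m x y * Sz * Sy := by
    calc auxD m y z * Sx * Sy = auxD m y z * Sy * Sx := by ring
      _ ≤ auxD m y y * Sz * Sx := mul_le_mul_of_nonneg_right hA hSx.le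
      _ = auxD m y y * Sx * Sz := by ring
      _ ≤ auxD m y x * Sy * Sz := mul_le_mul_of_nonneg_right hB hSz.le
      _ = auxD m x y * Sz * Sy := by rw [hB']; ring
  have hslope : auxD m y z / (Sy * Sz) ≤ auxD m x y / (Sx * Sy) := by
    rw [div_le_div_iff₀ (by positivity) (by positivity)]
    nlinarith [h1]
  have e1 : (1 - Sy⁻¹ - (1 - Sx⁻¹)) / (y - x) = auxD m x y / (Sx * Sy) := by
    have h2 : 1 - Sy⁻¹ - (1 - Sx⁻¹) = Sx⁻¹ - Sy⁻¹ := by ring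
    rw [h2, inv_sub_inv hSx.ne' hSy.ne', hdxy, mul_div_assoc,
      mul_div_cancel_left₀ _ (sub_pos.2 hxy).ne']
  have e2 : (1 - Sz⁻¹ - (1 - Sy⁻¹)) / (z - y) = auxD m y z / (Sy * Sz) := by
    have h2 : 1 - Sz⁻¹ - (1 - Sy⁻¹) = Sy⁻¹ - Sz⁻¹ := by ring
    rw [h2, inv_sub_inv hSy.ne' hSz.ne', hdyz, mul_div_assoc,
      mul_div_cancel_left₀ _ (sub_pos.2 hyz).ne']
  rw [e1, e2]
  exact hslope

open Finset in
/-- Lemma 2 (Properties): with positive coefficients `a_k`, a constant `b ≥ 0` and an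
integer `N ≥ 2`, the map `G(x) = 1 − (1 − b − ⟨a,x⟩)/(1 − (b + ⟨a,x⟩)^N)` (extended by
`(N−1)/N` where `b + ⟨a,x⟩ = 1`) is, on the nonnegative orthant, strictly increasing in
each coordinate and concave. -/
theorem stmt_6 (K : ℕ) (hK : 1 ≤ K) (a : Fin K → ℝ) (ha : ∀ k, 0 < a k)
    (b : ℝ) (hb : 0 ≤ b) (N : ℕ) (hN : 2 ≤ N) (G : (Fin K → ℝ) → ℝ)
    (hG : ∀ x : Fin K → ℝ,
      G x = if b + ∑ k, a k * x k = 1 then ((N : ℝ) - 1) / N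
        else 1 - (1 - b - ∑ k, a k * x k) / (1 - (b + ∑ k, a k * x k) ^ N)) :
    (∀ x y : Fin K → ℝ, (∀ k, 0 ≤ x k) → (∀ k, 0 ≤ y k) →
      (∀ k, x k ≤ y k) → (∃ k, x k < y k) → G x < G y)
    ∧ ConcaveOn ℝ {x : Fin K → ℝ | ∀ k, 0 ≤ x k} G := by
  have hN0 : (N:ℝ) ≠ 0 := by positivity
  -- rewrite G via the geometric-sum form
  have hGg : ∀ x : Fin K → ℝ, (∀ k, 0 ≤ x k) →
      G x = 1 - (∑ i ∈ range N, (b + ∑ k, a k * x k) ^ i)⁻¹ := by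
    intro x hx
    have hbx : 0 ≤ b + ∑ k, a k * x k :=
      add_nonneg hb (Finset.sum_nonneg fun k _ => mul_nonneg (ha k).le (hx k))
    rw [hG]
    by_cases ht : b + ∑ k, a k * x k = 1
    · rw [if_pos ht, ht]
      simp only [one_pow, Finset.sum_const, Finset.card_range, nsmul_eq_mul, mul_one]
      field_simp
    · rw [if_neg ht]
      have hSt : (0:ℝ) < ∑ i ∈ range N, (b + ∑ k, a k * x k) ^ i :=
        auxS_pos hbx (by omega)
      have h1t : (1:ℝ) - (b + ∑ k, a k * x k) ≠ 0 := sub_ne_zero.2 (Ne.symm ht)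
      have hfac : 1 - (b + ∑ k, a k * x k) ^ N
          = (1 - (b + ∑ k, a k * x k)) * ∑ i ∈ range N, (b + ∑ k, a k * x k) ^ i := by
        have h := geom_sum_mul (b + ∑ k, a k * x k) N
        linear_combination h
      have hnum : 1 - b - ∑ k, a k * x k = 1 - (b + ∑ k, a k * x k) := by ring
      rw [hnum, hfac, div_mul_cancel_left₀ h1t]
  have hℓ : ∀ x : Fin K → ℝ, (∀ k, 0 ≤ x k) → 0 ≤ b + ∑ k, a k * x k := fun x hx =>
    add_nonneg hb (Finset.sum_nonneg fun k _ => mul_nonneg (ha k).le (hx k))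
  constructor
  · -- strict monotonicity
    rintro x y hx hy hxy ⟨k0, hk0⟩
    have hlt : b + ∑ k, a k * x k < b + ∑ k, a k * y k := by
      have h : ∑ k, a k * x k < ∑ k, a k * y k :=
        Finset.sum_lt_sum (fun k _ => mul_le_mul_of_nonneg_left (hxy k) (ha k).le)
          ⟨k0, Finset.mem_univ _, mul_lt_mul_of_pos_left hk0 (ha k0)⟩
      linarith
    have hSlt := auxS_lt (hℓ x hx) hlt hN
    have hSx : (0:ℝ) < ∑ i ∈ range N, (b + ∑ k, a k * x k) ^ i :=
      auxS_pos (hℓ x hx) (by omega)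
    have hinv : (∑ i ∈ range N, (b + ∑ k, a k * y k) ^ i)⁻¹
        < (∑ i ∈ range N, (b + ∑ k, a k * x k) ^ i)⁻¹ := by
      apply inv_strictAnti₀ hSx hSlt
    rw [hGg x hx, hGg y hy]
    linarith
  · -- concavity
    have hconc := aux_concave N hN
    refine ⟨?_, ?_⟩
    · intro x hx y hy p q hp hq hpq
      intro k
      have : (p • x + q • y) k = p * x k + q * y k := by
        simp [Pi.add_apply, Pi.smul_apply, smul_eq_mul]
      rw [this]
      exact add_nonneg (mul_nonneg hp (hx k)) (mul_nonneg hq (hy k))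
    · intro x hx y hy p q hp hq hpq
      have hx' : ∀ k, 0 ≤ x k := hx
      have hy' : ∀ k, 0 ≤ y k := hy
      have hmix : ∀ k, 0 ≤ (p • x + q • y) k := fun k => by
        have : (p • x + q • y) k = p * x k + q * y k := by
          simp [Pi.add_apply, Pi.smul_apply, smul_eq_mul]
        rw [this]
        exact add_nonneg (mul_nonneg hp (hx' k)) (mul_nonneg hq (hy' k))
      have hlin : b + ∑ k, a k * (p • x + q • y) k
          = p * (b + ∑ k, a k * x k) + q * (b + ∑ k, a k * y k) := by
        have : ∀ k : Fin K, a k * (p • x + q • y) k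
            = p * (a k * x k) + q * (a k * y k) := fun k => by
          simp [Pi.add_apply, Pi.smul_apply, smul_eq_mul]; ring
        rw [Finset.sum_congr rfl fun k _ => this k, Finset.sum_add_distrib,
          ← Finset.mul_sum, ← Finset.mul_sum]
        linear_combination -b * hpq
      have key := hconc.2 (Set.mem_Ici.2 (hℓ x hx')) (Set.mem_Ici.2 (hℓ y hy')) hp hq hpq
      rw [hGg x hx', hGg y hy', hGg _ hmix, hlin]
      simpa using key
end

section
/- Let n ≥ 1 and let Ξ : ℝⁿ → ℝⁿ be a function that is increasing with respect to the coordinatewise partial order (x ≤ y coordinatewise implies Ξ(x) ≤ Ξ(y) coordinatewise) and each of whose coordinate functions is strictly concave on ℝⁿ. Suppose that Ξ(0) ≥ 0 coordinatewise, that there exists a ∈ ℝⁿ with all coordinates positive such that Ξ(a) > a strictly in every coordinate, and that there exists b ∈ ℝⁿ with b > a in every coordinate such that Ξ(b) < b strictly in every coordinate. Then Ξ has a unique fixed point with all coordinates strictly positive. -/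
/-- Theorem 1 (fixed point for increasing concave functions): if `Ξ : ℝⁿ → ℝⁿ` is
increasing for the coordinatewise order, each coordinate function is strictly concave,
`Ξ(0) ≥ 0`, `Ξ(a) > a` (strictly in every coordinate) for some strictly positive `a`,
and `Ξ(b) < b` for some `b > a` (coordinatewise strict), then `Ξ` has a unique fixed
point with all coordinates strictly positive. -/
theorem stmt_8 (n : ℕ) (hn : 1 ≤ n) (Xi : (Fin n → ℝ) → Fin n → ℝ)
    (hmono : Monotone Xi)
    (hconc : ∀ i, StrictConcaveOn ℝ (Set.univ : Set (Fin n → ℝ)) (fun x => Xi x i))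
    (h0 : ∀ i, 0 ≤ Xi 0 i)
    (a : Fin n → ℝ) (ha : ∀ i, 0 < a i) (hXa : ∀ i, a i < Xi a i)
    (b : Fin n → ℝ) (hab : ∀ i, a i < b i) (hXb : ∀ i, Xi b i < b i) :
    ∃! x : Fin n → ℝ, (∀ i, 0 < x i) ∧ Xi x = x := by
  classical
  have hab' : a ≤ b := fun i => (hab i).le
  set S : Set (Fin n → ℝ) := {z | z ≤ b ∧ z ≤ Xi z} with hS
  have haS : a ∈ S := ⟨hab', fun i => (hXa i).le⟩
  have hbddS : BddAbove S := ⟨b, fun z hz => hz.1⟩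
  have hne : S.Nonempty := ⟨a, haS⟩
  set x := sSup S with hx
  have hax : a ≤ x := le_csSup hbddS haS
  have hxb : x ≤ b := csSup_le hne (fun z hz => hz.1)
  have hxle : x ≤ Xi x :=
    csSup_le hne (fun z hz => hz.2.trans (hmono (le_csSup hbddS hz)))
  have hXxS : Xi x ∈ S :=
    ⟨(hmono hxb).trans (fun i => (hXb i).le), hmono hxle⟩
  have hfix : Xi x = x := le_antisymm (le_csSup hbddS hXxS) hxle
  have hxpos : ∀ i, 0 < x i := fun i => lt_of_lt_of_le (ha i) (hax i)
  -- key uniqueness lemma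
  have key : ∀ u v : Fin n → ℝ, (∀ i, 0 < u i) → (∀ i, 0 < v i) →
      Xi u = u → Xi v = v → v ≤ u := by
    intro u v hu hv hfu hfv
    have hne' : (Finset.univ : Finset (Fin n)).Nonempty := ⟨⟨0, hn⟩, Finset.mem_univ _⟩
    set t := Finset.univ.inf' hne' (fun i => u i / v i) with ht
    obtain ⟨i0, -, hi0⟩ := Finset.exists_mem_eq_inf' hne' (fun i => u i / v i)
    have htpos : 0 < t := by
      rw [ht, Finset.lt_inf'_iff]
      exact fun i _ => div_pos (hu i) (hv i)
    have htle : ∀ i, t ≤ u i / v i := fun i => Finset.inf'_le _ (Finset.mem_univ i)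
    have htv : ∀ i, t * v i ≤ u i := fun i => (le_div_iff₀ (hv i)).1 (htle i)
    rcases le_or_gt 1 t with h1 | h1
    · intro i
      calc v i = 1 * v i := (one_mul _).symm
        _ ≤ t * v i := mul_le_mul_of_nonneg_right h1 (hv i).le
        _ ≤ u i := htv i
    · exfalso
      have hvne : v ≠ 0 := by
        intro h
        have := hv ⟨0, hn⟩
        rw [h] at this
        exact lt_irrefl _ this
      have hui0 : u i0 = t * v i0 := by
        have := hi0.symm
        exact (div_eq_iff (hv i0).ne').1 this
      have hstr := (hconc i0).2 (Set.mem_univ v) (Set.mem_univ (0 : Fin n → ℝ)) hvne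
        htpos (by linarith : (0:ℝ) < 1 - t) (by ring)
      simp only [smul_zero, add_zero] at hstr
      -- hstr : t • Xi v i0 + (1 - t) • Xi 0 i0 < Xi (t • v) i0
      have hstr' : t * v i0 < Xi (t • v) i0 := by
        have h0' : 0 ≤ (1 - t) * Xi 0 i0 :=
          mul_nonneg (by linarith) (h0 i0)
        have hv0 : Xi v i0 = v i0 := by rw [hfv]
        simp only [smul_eq_mul, hv0] at hstr
        nlinarith [hstr]
      have hle : t • v ≤ u := by
        intro i
        simpa [smul_eq_mul] using htv i
      have : Xi (t • v) i0 ≤ u i0 := by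
        have := hmono hle
        rw [hfu] at this
        exact this i0
      rw [hui0] at this
      exact absurd (lt_of_lt_of_le hstr' this) (lt_irrefl _)
  refine ⟨x, ⟨hxpos, hfix⟩, ?_⟩
  rintro y ⟨hypos, hfy⟩
  exact le_antisymm (key x y hxpos hypos hfix hfy) (key y x hypos hxpos hfy hfix)
end

section
/- Let K ≥ 1, let λ_k, μ_k, w_k (for k = 1,…,K) and P_c, λ_u be strictly positive real numbers, and let N_k ≥ 1 be integers. For ρ ∈ ℝ^K define s_k(ρ) = (μ_k / (P_c λ_u w_k)) · Σ_{j=1}^K ρ_j λ_j w_j and g_k(ρ) = 1 − (1 − s_k(ρ))/(1 − s_k(ρ)^(N_k+1)) when s_k(ρ) ≠ 1, with g_k(ρ) = N_k/(N_k+1) when s_k(ρ) = 1. Then the system of fixed point equations ρ_k = g_k(ρ), k = 1,…,K, has a solution with ρ_k > 0 for all k if and only if Σ_{k=1}^K λ_k μ_k > λ_u · P_c; moreover, when this condition holds, the positive solution is unique. -/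
open Finset

noncomputable def phiAux (N : ℕ) (x : ℝ) : ℝ :=
  (∑ i ∈ Finset.range N, x ^ (i+1)) / (∑ i ∈ Finset.range (N+1), x ^ i)

lemma phiAux_den (N : ℕ) (x : ℝ) :
    (∑ i ∈ Finset.range (N+1), x ^ i) = (∑ i ∈ Finset.range N, x ^ (i+1)) + 1 := by
  rw [Finset.sum_range_succ']
  simp

lemma num_pos {N : ℕ} (hN : 1 ≤ N) {x : ℝ} (hx : 0 < x) :
    0 < ∑ i ∈ Finset.range N, x ^ (i+1) :=
  Finset.sum_pos (fun i _ => pow_pos hx _) (by simp [Finset.nonempty_range_iff]; omega)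

lemma den_pos (N : ℕ) {x : ℝ} (hx : 0 < x) :
    0 < ∑ i ∈ Finset.range (N+1), x ^ i :=
  Finset.sum_pos (fun i _ => pow_pos hx _) (by simp)

lemma phiAux_pos {N : ℕ} (hN : 1 ≤ N) {x : ℝ} (hx : 0 < x) : 0 < phiAux N x :=
  div_pos (num_pos hN hx) (den_pos N hx)

lemma phiAux_lt_one (N : ℕ) {x : ℝ} (hx : 0 < x) : phiAux N x < 1 := by
  rw [phiAux, div_lt_one (den_pos N hx), phiAux_den]
  linarith

lemma phiAux_lt_self (N : ℕ) {x : ℝ} (hx : 0 < x) : phiAux N x < x := by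
  rw [phiAux, div_lt_iff₀ (den_pos N hx), phiAux_den]
  have key : (∑ i ∈ Finset.range N, x ^ (i+1)) - x * (∑ i ∈ Finset.range N, x ^ (i+1))
      = x - x ^ (N+1) := by
    rw [Finset.mul_sum, ← Finset.sum_sub_distrib]
    have : ∀ i ∈ Finset.range N, x ^ (i+1) - x * x ^ (i+1) = x ^ (i+1) - x ^ (i+1+1) := by
      intro i _; ring
    rw [Finset.sum_congr rfl this, Finset.sum_range_sub' (fun i => x ^ (i+1))]
    simp
  have hp : 0 < x ^ (N+1) := pow_pos hx _
  nlinarith [Finset.sum_nonneg (fun i (_ : i ∈ Finset.range N) => (pow_pos hx (i+1)).le)]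

lemma pow_ne_one_of_ne_one {x : ℝ} (hx : 0 < x) (hx1 : x ≠ 1) (n : ℕ) (hn : n ≠ 0) :
    x ^ n ≠ 1 := by
  rcases lt_or_gt_of_ne hx1 with h | h
  · exact ne_of_lt (pow_lt_one₀ hx.le h hn)
  · exact ne_of_gt (one_lt_pow₀ h hn)

lemma phiAux_eq_g (N : ℕ) {x : ℝ} (hx : 0 < x) :
    (if x = 1 then (N : ℝ) / ((N : ℝ) + 1) else 1 - (1 - x) / (1 - x ^ (N + 1)))
      = phiAux N x := by
  by_cases h1 : x = 1
  · subst h1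
    simp [phiAux]
  · rw [if_neg h1]
    have hD : (∑ i ∈ Finset.range (N+1), x ^ i) ≠ 0 := (den_pos N hx).ne'
    have hgeom : (1 - x) * (∑ i ∈ Finset.range (N+1), x ^ i) = 1 - x ^ (N+1) := by
      have := geom_sum_mul x (N+1)
      nlinarith [this]
    have hx1 : (1 : ℝ) - x ≠ 0 := sub_ne_zero.mpr (Ne.symm h1)
    have hxN : (1 : ℝ) - x ^ (N+1) ≠ 0 :=
      sub_ne_zero.mpr (Ne.symm (pow_ne_one_of_ne_one hx h1 (N+1) (by omega)))
    have hA1 : (∑ i ∈ Finset.range N, x ^ (i+1)) + 1 ≠ 0 := by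
      rw [← phiAux_den]; exact hD
    rw [phiAux, phiAux_den, ← hgeom, phiAux_den]
    rw [mul_comm (1-x), div_mul_eq_div_div, div_right_comm, div_self hx1]
    field_simp
    ring

lemma B_ge_one {N : ℕ} (hN : 1 ≤ N) {x : ℝ} (hx : 0 ≤ x) :
    1 ≤ ∑ i ∈ Finset.range N, x ^ i := by
  have h0 : (0:ℕ) ∈ Finset.range N := by simp; omega
  calc (1:ℝ) = x ^ 0 := by simp
    _ ≤ ∑ i ∈ Finset.range N, x ^ i :=
        Finset.single_le_sum (fun i _ => pow_nonneg hx i) h0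

lemma A_eq_B_mul (N : ℕ) (x : ℝ) :
    (∑ i ∈ Finset.range N, x ^ (i+1)) = (∑ i ∈ Finset.range N, x ^ i) * x := by
  rw [Finset.sum_mul]
  exact Finset.sum_congr rfl (fun i _ => (pow_succ x i).symm)

lemma phiAux_ge {N : ℕ} (hN : 1 ≤ N) {x : ℝ} (hx : 0 < x) (hx1 : x ≤ 1) :
    x * (1 - x) ≤ phiAux N x := by
  rw [phiAux, le_div_iff₀ (den_pos N hx), Finset.sum_range_succ, A_eq_B_mul]
  have hB : 1 ≤ ∑ i ∈ Finset.range N, x ^ i := B_ge_one hN hx.le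
  have h2 : x ^ (N+1) ≤ x ^ 2 := pow_le_pow_of_le_one hx.le hx1 (by omega)
  have h2' : (0:ℝ) ≤ x ^ (N+1) := (pow_pos hx _).le
  have hNx : x ^ N * x = x ^ (N+1) := (pow_succ x N).symm
  nlinarith [sq_nonneg x, mul_pos hx hx]

lemma phiAux_ratio {N : ℕ} (hN : 1 ≤ N) {x y : ℝ} (hx : 0 < x) (hxy : x < y) :
    phiAux N y * x < phiAux N x * y := by
  have hy : 0 < y := hx.trans hxy
  have key : (∑ i ∈ Finset.range N, y ^ i) * x ^ N
      < (∑ i ∈ Finset.range N, x ^ i) * y ^ N := by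
    rw [Finset.sum_mul, Finset.sum_mul]
    refine Finset.sum_lt_sum_of_nonempty (by simp [Finset.nonempty_range_iff]; omega) ?_
    intro i hi
    have hiN : i < N := Finset.mem_range.mp hi
    have hxe : x ^ N = x ^ i * x ^ (N - i) := by rw [← pow_add]; congr 1; omega
    have hye : y ^ N = y ^ i * y ^ (N - i) := by rw [← pow_add]; congr 1; omega
    have h1 : x ^ (N - i) < y ^ (N - i) := pow_lt_pow_left₀ hxy hx.le (by omega)
    have h2 : 0 < x ^ i * y ^ i := mul_pos (pow_pos hx i) (pow_pos hy i)
    have := mul_lt_mul_of_pos_left h1 h2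
    rw [hxe, hye]
    linear_combination this
  rw [phiAux, phiAux, div_mul_eq_mul_div, div_mul_eq_mul_div,
    div_lt_div_iff₀ (den_pos N hy) (den_pos N hx),
    Finset.sum_range_succ, Finset.sum_range_succ, A_eq_B_mul, A_eq_B_mul]
  have := mul_lt_mul_of_pos_left key (mul_pos hx hy)
  linear_combination this

section main

variable {K : ℕ} (lam mu w : Fin K → ℝ) (Nk : Fin K → ℕ) (Pc lamu : ℝ)

/-- energy utilization coefficient -/
noncomputable def cA (k : Fin K) : ℝ := mu k / (Pc * lamu * w k)

/-- scalar self-map -/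
noncomputable def HA (T : ℝ) : ℝ :=
  ∑ k, phiAux (Nk k) (cA mu w Pc lamu k * T) * lam k * w k

variable (hK : 1 ≤ K) (hlam : ∀ k, 0 < lam k) (hmu : ∀ k, 0 < mu k)
  (hw : ∀ k, 0 < w k) (hNk : ∀ k, 1 ≤ Nk k) (hPc : 0 < Pc) (hlamu : 0 < lamu)

include hmu hw hPc hlamu in
lemma cA_pos (k : Fin K) : 0 < cA mu w Pc lamu k := by
  unfold cA; exact div_pos (hmu k) (mul_pos (mul_pos hPc hlamu) (hw k))

include hK hlam hmu hw hNk hPc hlamu in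
lemma HA_mono {T T' : ℝ} (hT : 0 < T) (hTT' : T < T') :
    HA lam mu w Nk Pc lamu T' * T < HA lam mu w Nk Pc lamu T * T' := by
  have hne : (Finset.univ : Finset (Fin K)).Nonempty := ⟨⟨0, hK⟩, Finset.mem_univ _⟩
  have hT' : 0 < T' := hT.trans hTT'
  unfold HA
  rw [Finset.sum_mul, Finset.sum_mul]
  refine Finset.sum_lt_sum_of_nonempty hne ?_
  intro k _
  have hck := cA_pos mu w Pc lamu hmu hw hPc hlamu k
  have hr := phiAux_ratio (hNk k) (mul_pos hck hT)
    (mul_lt_mul_of_pos_left hTT' hck)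
  have h2 : phiAux (Nk k) (cA mu w Pc lamu k * T') * T
      < phiAux (Nk k) (cA mu w Pc lamu k * T) * T' := by
    refine lt_of_mul_lt_mul_left (a := cA mu w Pc lamu k) ?_ hck.le
    nlinarith [hr]
  nlinarith [mul_lt_mul_of_pos_right h2 (mul_pos (hlam k) (hw k))]

include hK hlam hmu hw hNk hPc hlamu in
lemma HA_uniq {T T' : ℝ} (hT : 0 < T) (hT' : 0 < T')
    (h1 : HA lam mu w Nk Pc lamu T = T) (h2 : HA lam mu w Nk Pc lamu T' = T') :
    T = T' := by
  rcases lt_trichotomy T T' with h | h | h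
  · have := HA_mono lam mu w Nk Pc lamu hK hlam hmu hw hNk hPc hlamu hT h
    rw [h1, h2] at this; nlinarith
  · exact h
  · have := HA_mono lam mu w Nk Pc lamu hK hlam hmu hw hNk hPc hlamu hT' h
    rw [h1, h2] at this; nlinarith

omit hNk in
include hK hlam hmu hw hPc hlamu in
lemma HA_lt_b {T : ℝ} (hT : 0 < T) :
    HA lam mu w Nk Pc lamu T < ∑ k, lam k * w k := by
  have hne : (Finset.univ : Finset (Fin K)).Nonempty := ⟨⟨0, hK⟩, Finset.mem_univ _⟩
  unfold HA
  refine Finset.sum_lt_sum_of_nonempty hne ?_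
  intro k _
  have hck := cA_pos mu w Pc lamu hmu hw hPc hlamu k
  have h1 := phiAux_lt_one (Nk k) (mul_pos hck hT)
  nlinarith [mul_pos (hlam k) (hw k)]

include hPc hlamu hw in
lemma cA_sum_eq :
    (Pc * lamu) * ∑ k, cA mu w Pc lamu k * lam k * w k = ∑ k, lam k * mu k := by
  rw [Finset.mul_sum]
  refine Finset.sum_congr rfl ?_
  intro k _
  unfold cA
  field_simp [hPc.ne', hlamu.ne', (hw k).ne']

lemma HA_continuousOn (hmu : ∀ k, 0 < mu k) (hw : ∀ k, 0 < w k) (hPc : 0 < Pc)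
    (hlamu : 0 < lamu) {a b : ℝ} (ha : 0 < a) :
    ContinuousOn (fun T => HA lam mu w Nk Pc lamu T - T) (Set.Icc a b) := by
  refine ContinuousOn.sub ?_ continuousOn_id
  unfold HA
  refine continuousOn_finset_sum _ ?_
  intro k _
  refine ContinuousOn.mul (ContinuousOn.mul ?_ continuousOn_const) continuousOn_const
  unfold phiAux
  refine ContinuousOn.div ?_ ?_ ?_
  · exact Continuous.continuousOn (by continuity)
  · exact Continuous.continuousOn (by continuity)
  · intro T hT
    have hck := cA_pos mu w Pc lamu hmu hw hPc hlamu k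
    exact (den_pos _ (mul_pos hck (lt_of_lt_of_le ha hT.1))).ne'

include hK hlam hmu hw hNk hPc hlamu in
lemma HA_exists (hcond : ∑ k, lam k * mu k > lamu * Pc) :
    ∃ T, 0 < T ∧ HA lam mu w Nk Pc lamu T = T := by
  have hne : (Finset.univ : Finset (Fin K)).Nonempty := ⟨⟨0, hK⟩, Finset.mem_univ _⟩
  have hck : ∀ k, 0 < cA mu w Pc lamu k := cA_pos mu w Pc lamu hmu hw hPc hlamu
  set C : ℝ := ∑ k, cA mu w Pc lamu k * lam k * w k with hC
  have hPl : 0 < Pc * lamu := mul_pos hPc hlamu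
  have hCgt : 1 < C := by
    have h := cA_sum_eq lam mu w Pc lamu hw hPc hlamu
    rw [← hC] at h
    nlinarith
  set δ : ℝ := (C - 1) / (2 * C) with hδ
  have hC0 : 0 < C := by linarith
  have hδpos : 0 < δ := by rw [hδ]; exact div_pos (by linarith) (by linarith)
  have hδ1 : δ < 1 := by
    rw [hδ, div_lt_one (by linarith)]; linarith
  set M : ℝ := Finset.univ.sup' hne (cA mu w Pc lamu) with hM
  have hMpos : 0 < M :=
    lt_of_lt_of_le (hck ⟨0, hK⟩) (Finset.le_sup' _ (Finset.mem_univ _))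
  set a : ℝ := δ / M with ha_def
  have ha : 0 < a := by positivity
  have hca : ∀ k, cA mu w Pc lamu k * a ≤ δ := by
    intro k
    calc cA mu w Pc lamu k * a ≤ M * a :=
          mul_le_mul_of_nonneg_right (Finset.le_sup' _ (Finset.mem_univ k)) ha.le
      _ = δ := by rw [ha_def]; field_simp
  have hca1 : ∀ k, cA mu w Pc lamu k * a ≤ 1 := fun k => (hca k).trans hδ1.le
  have step1 : ∑ k, (cA mu w Pc lamu k * a) * (1 - cA mu w Pc lamu k * a) * (lam k * w k)
      ≤ HA lam mu w Nk Pc lamu a := by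
    refine Finset.sum_le_sum ?_
    intro k _
    have h := phiAux_ge (hNk k) (mul_pos (hck k) ha) (hca1 k)
    have hlw : 0 < lam k * w k := mul_pos (hlam k) (hw k)
    unfold HA at *
    nlinarith [h, hlw]
  have step2 : ∑ k, (cA mu w Pc lamu k * a) * (1 - δ) * (lam k * w k)
      ≤ ∑ k, (cA mu w Pc lamu k * a) * (1 - cA mu w Pc lamu k * a) * (lam k * w k) := by
    refine Finset.sum_le_sum ?_
    intro k _
    have hlw : 0 < lam k * w k := mul_pos (hlam k) (hw k)
    have h1 : 0 < cA mu w Pc lamu k * a := mul_pos (hck k) ha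
    nlinarith [mul_nonneg (mul_pos h1 hlw).le (sub_nonneg.mpr (hca k))]
  have step3 : ∑ k, (cA mu w Pc lamu k * a) * (1 - δ) * (lam k * w k)
      = a * (1 - δ) * C := by
    rw [hC, Finset.mul_sum]
    refine Finset.sum_congr rfl ?_
    intro k _; ring
  have step4 : a < a * (1 - δ) * C := by
    have h4 : (1 - δ) * C = (C + 1) / 2 := by
      rw [hδ]; field_simp; ring
    nlinarith [h4]
  have hHa : a < HA lam mu w Nk Pc lamu a := by
    rw [step3] at step2; linarith
  set b : ℝ := ∑ k, lam k * w k with hb_def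
  have hb : 0 < b :=
    Finset.sum_pos (fun k _ => mul_pos (hlam k) (hw k)) hne
  have hHb : HA lam mu w Nk Pc lamu b < b :=
    HA_lt_b lam mu w Nk Pc lamu hK hlam hmu hw hPc hlamu hb
  have hab : a < b :=
    hHa.trans (HA_lt_b lam mu w Nk Pc lamu hK hlam hmu hw hPc hlamu ha)
  have hcont := HA_continuousOn lam mu w Nk Pc lamu hmu hw hPc hlamu (b := b) ha
  have hmem : (0:ℝ) ∈ Set.Icc (HA lam mu w Nk Pc lamu b - b)
      (HA lam mu w Nk Pc lamu a - a) := ⟨by linarith, by linarith⟩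
  obtain ⟨T, hTmem, hFT⟩ := intermediate_value_Icc' hab.le hcont hmem
  simp only [sub_eq_zero] at hFT
  exact ⟨T, lt_of_lt_of_le ha hTmem.1, hFT⟩

end main

open Finset in
/-- Theorem 2: the availability fixed-point system `ρ_k = g_k(ρ)`, where
`s_k(ρ) = (μ_k/(P_c λ_u w_k))·Σ_j ρ_j λ_j w_j` and
`g_k(ρ) = 1 − (1 − s_k(ρ))/(1 − s_k(ρ)^(N_k+1))` (extended by `N_k/(N_k+1)` at
`s_k(ρ) = 1`), has a strictly positive solution iff `Σ_k λ_k μ_k > λ_u P_c`;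
moreover, under this condition the positive solution is unique. -/
theorem stmt_9 (K : ℕ) (hK : 1 ≤ K) (lam mu w : Fin K → ℝ) (Nk : Fin K → ℕ)
    (hlam : ∀ k, 0 < lam k) (hmu : ∀ k, 0 < mu k) (hw : ∀ k, 0 < w k)
    (hNk : ∀ k, 1 ≤ Nk k) (Pc lamu : ℝ) (hPc : 0 < Pc) (hlamu : 0 < lamu)
    (s : (Fin K → ℝ) → Fin K → ℝ)
    (hs : ∀ ρ k, s ρ k = mu k / (Pc * lamu * w k) * ∑ j, ρ j * lam j * w j)
    (g : (Fin K → ℝ) → Fin K → ℝ)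
    (hg : ∀ ρ k, g ρ k = if s ρ k = 1 then (Nk k : ℝ) / ((Nk k : ℝ) + 1)
      else 1 - (1 - s ρ k) / (1 - s ρ k ^ (Nk k + 1))) :
    ((∃ ρ : Fin K → ℝ, (∀ k, 0 < ρ k) ∧ ∀ k, ρ k = g ρ k)
        ↔ ∑ k, lam k * mu k > lamu * Pc)
    ∧ (∑ k, lam k * mu k > lamu * Pc →
        ∃! ρ : Fin K → ℝ, (∀ k, 0 < ρ k) ∧ ∀ k, ρ k = g ρ k) := by
  have hne : (Finset.univ : Finset (Fin K)).Nonempty := ⟨⟨0, hK⟩, Finset.mem_univ _⟩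
  have hck : ∀ k, 0 < cA mu w Pc lamu k := cA_pos mu w Pc lamu hmu hw hPc hlamu
  have hPl : 0 < Pc * lamu := mul_pos hPc hlamu
  -- bridge: a positive fixed point yields a positive fixed point of the scalar map `HA`
  have hbridge : ∀ ρ : Fin K → ℝ, (∀ k, 0 < ρ k) → (∀ k, ρ k = g ρ k) →
      (0 < ∑ j, ρ j * lam j * w j) ∧
      (∀ k, ρ k = phiAux (Nk k) (cA mu w Pc lamu k * ∑ j, ρ j * lam j * w j)) ∧
      HA lam mu w Nk Pc lamu (∑ j, ρ j * lam j * w j) = ∑ j, ρ j * lam j * w j := by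
    intro ρ hpos hfx
    have hT : 0 < ∑ j, ρ j * lam j * w j :=
      Finset.sum_pos (fun j _ => mul_pos (mul_pos (hpos j) (hlam j)) (hw j)) hne
    have hrep : ∀ k, ρ k
        = phiAux (Nk k) (cA mu w Pc lamu k * ∑ j, ρ j * lam j * w j) := by
      intro k
      have hsk : s ρ k = cA mu w Pc lamu k * ∑ j, ρ j * lam j * w j := by
        rw [hs]; simp only [cA]
      rw [hfx k, hg, hsk]
      exact phiAux_eq_g (Nk k) (mul_pos (hck k) hT)
    refine ⟨hT, hrep, ?_⟩
    unfold HA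
    conv_rhs => rw [Finset.sum_congr rfl (fun k (_ : k ∈ Finset.univ) => by rw [hrep k])]
  -- forward direction
  have fwd : (∃ ρ : Fin K → ℝ, (∀ k, 0 < ρ k) ∧ ∀ k, ρ k = g ρ k) →
      ∑ k, lam k * mu k > lamu * Pc := by
    rintro ⟨ρ, hpos, hfx⟩
    obtain ⟨hT, hrep, -⟩ := hbridge ρ hpos hfx
    set T := ∑ j, ρ j * lam j * w j with hTdef
    have hlt : T < ∑ k, (cA mu w Pc lamu k * T) * (lam k * w k) := by
      conv_lhs => rw [hTdef]
      refine Finset.sum_lt_sum_of_nonempty hne ?_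
      intro k _
      have h := phiAux_lt_self (Nk k) (mul_pos (hck k) hT)
      rw [hrep k]
      nlinarith [mul_pos (hlam k) (hw k)]
    have h2 : ∑ k, (cA mu w Pc lamu k * T) * (lam k * w k)
        = T * ∑ k, cA mu w Pc lamu k * lam k * w k := by
      rw [Finset.mul_sum]
      exact Finset.sum_congr rfl (fun k _ => by ring)
    have h := cA_sum_eq lam mu w Pc lamu hw hPc hlamu
    have h3 : (Pc * lamu) * ∑ k, (cA mu w Pc lamu k * T) * (lam k * w k)
        = T * ∑ k, lam k * mu k := by
      rw [h2]; linear_combination T * h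
    have h4 := mul_lt_mul_of_pos_left hlt hPl
    rw [h3] at h4
    nlinarith [hT]
  -- backward direction with uniqueness
  have bwd : ∑ k, lam k * mu k > lamu * Pc →
      ∃! ρ : Fin K → ℝ, (∀ k, 0 < ρ k) ∧ ∀ k, ρ k = g ρ k := by
    intro hcond
    obtain ⟨T, hT, hHT⟩ :=
      HA_exists lam mu w Nk Pc lamu hK hlam hmu hw hNk hPc hlamu hcond
    set ρ : Fin K → ℝ := fun k => phiAux (Nk k) (cA mu w Pc lamu k * T) with hρ
    have hρpos : ∀ k, 0 < ρ k := fun k => phiAux_pos (hNk k) (mul_pos (hck k) hT)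
    have hTsum : ∑ j, ρ j * lam j * w j = T := by
      simp only [hρ]
      unfold HA at hHT
      exact hHT
    have hfx : ∀ k, ρ k = g ρ k := by
      intro k
      have hsk : s ρ k = cA mu w Pc lamu k * T := by
        rw [hs, hTsum]; simp only [cA]
      rw [hg, hsk]
      exact (phiAux_eq_g (Nk k) (mul_pos (hck k) hT)).symm
    refine ⟨ρ, ⟨hρpos, hfx⟩, ?_⟩
    rintro ρ' ⟨hpos', hfx'⟩
    obtain ⟨hT', hrep', hHT'⟩ := hbridge ρ' hpos' hfx'
    have hTT : (∑ j, ρ' j * lam j * w j) = T :=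
      HA_uniq lam mu w Nk Pc lamu hK hlam hmu hw hNk hPc hlamu hT' hT hHT' hHT
    funext k
    rw [hrep' k, hTT]
  exact ⟨⟨fwd, fun h => (bwd h).exists⟩, bwd⟩
end

section
/- Let N ≥ 2 be an integer and 0 < a ≤ 1 a real number. Define g : ℝ → ℝ by g(ρ) = 1 − (1 − a·ρ)/(1 − (a·ρ)^N) when a·ρ ≠ 1 and g(ρ) = (N−1)/N when a·ρ = 1. Then g(ρ) < ρ for every ρ > 0; in particular g has no strictly positive fixed point. -/
/-- Single-tier necessity in Theorem 2: for an integer `N ≥ 2` and a real `0 < a ≤ 1`,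
the map `g(ρ) = 1 − (1 − a·ρ)/(1 − (a·ρ)^N)` (extended by `(N−1)/N` at `a·ρ = 1`)
satisfies `g(ρ) < ρ` for every `ρ > 0`; in particular it has no strictly positive
fixed point. -/
theorem stmt_10 (N : ℕ) (hN : 2 ≤ N) (a : ℝ) (ha0 : 0 < a) (ha1 : a ≤ 1)
    (g : ℝ → ℝ)
    (hg : ∀ ρ : ℝ, g ρ = if a * ρ = 1 then ((N : ℝ) - 1) / N
      else 1 - (1 - a * ρ) / (1 - (a * ρ) ^ N)) :
    (∀ ρ : ℝ, 0 < ρ → g ρ < ρ) ∧ ¬∃ ρ : ℝ, 0 < ρ ∧ g ρ = ρ := by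
  have key : ∀ ρ : ℝ, 0 < ρ → g ρ < ρ := by
    intro ρ hρ
    rw [hg]
    have hx : 0 < a * ρ := mul_pos ha0 hρ
    have hxρ : a * ρ ≤ ρ := by nlinarith
    have hNpos : (0:ℝ) < (N:ℝ) := by positivity
    split_ifs with h1
    · have hρ1 : 1 ≤ ρ := by nlinarith
      have : ((N:ℝ) - 1) / N < 1 := by
        rw [div_lt_one hNpos]; linarith
      linarith
    · rcases lt_trichotomy (a * ρ) 1 with hlt | heq | hgt
      · have hpN : 0 < (a * ρ) ^ N := pow_pos hx N
        have h2 : (a * ρ) ^ N < 1 := pow_lt_one₀ hx.le hlt (by omega)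
        have hkey : 1 - a * ρ < (1 - a * ρ) / (1 - (a * ρ) ^ N) := by
          rw [lt_div_iff₀ (by linarith)]
          nlinarith
        linarith
      · exact absurd heq h1
      · have h2 : 1 < (a * ρ) ^ N := one_lt_pow₀ hgt (by omega)
        have hpos : 0 < (1 - a * ρ) / (1 - (a * ρ) ^ N) := by
          apply div_pos_of_neg_of_neg <;> linarith
        linarith
  refine ⟨key, ?_⟩
  rintro ⟨ρ, hρ, hfix⟩
  exact absurd hfix (ne_of_lt (key ρ hρ))
end

section
/- Let μ, ν > 0 be real numbers and N ≥ 1 an integer. Let B be the N×N real matrix indexed by 1,…,N with B(i,i) = −(μ+ν) for 1 ≤ i ≤ N−1, B(N,N) = −ν, B(i,i+1) = μ for 1 ≤ i ≤ N−1, B(i,i−1) = ν for 2 ≤ i ≤ N, and all other entries 0. Define the N×N matrix M by M(i,j) = ν^(−j) · Σ_{n=1}^{min(i,j)} μ^(j−n)·ν^(n−1). Then (−B)·M is the identity matrix; in particular −B is invertible and (−B)^(−1)(i,j) = ν^(−j) · Σ_{n=1}^{min(i,j)} μ^(j−n)·ν^(n−1). -/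
open Finset in
/-- Equation (17): for the matrix `B` obtained from the birth-death generator by
deleting the row and column of state `0` (states `1,…,N` are encoded by `Fin N`,
with index `i` standing for state `i+1`), the matrix
`M(i,j) = ν^(−j)·Σ_{n=1}^{min(i,j)} μ^(j−n)·ν^(n−1)` satisfies `(−B)·M = 1`;
in particular `−B` is invertible with inverse `M`. -/
theorem stmt_12 (μ ν : ℝ) (hμ : 0 < μ) (hν : 0 < ν) (N : ℕ) (hN : 1 ≤ N)
    (B M : Matrix (Fin N) (Fin N) ℝ)
    (hB : ∀ i j : Fin N,
      B i j = if (j : ℕ) = (i : ℕ) + 1 then μ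
        else if (j : ℕ) + 1 = (i : ℕ) then ν
        else if i = j then (if (i : ℕ) + 1 = N then -ν else -(μ + ν))
        else 0)
    (hM : ∀ i j : Fin N,
      M i j = (ν ^ ((j : ℕ) + 1))⁻¹ *
        ∑ n ∈ Finset.Icc 1 (min ((i : ℕ) + 1) ((j : ℕ) + 1)),
          μ ^ ((j : ℕ) + 1 - n) * ν ^ (n - 1)) :
    (-B) * M = 1 ∧ IsUnit (-B) ∧ (-B)⁻¹ = M := by
  have key : (-B) * M = 1 := by
    ext i j
    set J : ℕ := (j : ℕ) + 1 with hJdef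
    have hJ1 : 1 ≤ J := Nat.le_add_left 1 _
    set g : ℕ → ℝ := fun m => ∑ n ∈ Finset.Icc 1 (min m J), μ ^ (J - n) * ν ^ (n - 1)
      with hgdef
    have hMg : ∀ k : Fin N, M k j = (ν ^ J)⁻¹ * g ((k : ℕ) + 1) := fun k => hM k j
    have g1 : g 1 = μ ^ (J - 1) := by
      simp [hgdef, min_eq_left hJ1]
    have gstep : ∀ m : ℕ, m < J → g (m + 1) = g m + μ ^ (J - (m + 1)) * ν ^ m := by
      intro m hm
      have h1 : min (m + 1) J = m + 1 := min_eq_left (by omega)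
      have h2 : min m J = m := min_eq_left (by omega)
      simp only [hgdef, h1, h2]
      rw [Finset.sum_Icc_succ_top (by omega : 1 ≤ m + 1)]
      simp
    have gflat : ∀ m : ℕ, J ≤ m → g (m + 1) = g m := by
      intro m hm
      simp only [hgdef, min_eq_right hm, min_eq_right (by omega : J ≤ m + 1)]
    have hνJ : (ν : ℝ) ^ J ≠ 0 := pow_ne_zero _ (ne_of_gt hν)
    -- value of the (i,j) entry
    rw [Matrix.mul_apply, Matrix.one_apply]
    have hzero : ∀ k : Fin N, ¬ ((k : ℕ) + 1 = (i : ℕ) ∨ (k : ℕ) = (i : ℕ)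
        ∨ (k : ℕ) = (i : ℕ) + 1) → (-B) i k * M k j = 0 := by
      intro k hk
      push_neg at hk
      obtain ⟨h1, h2, h3⟩ := hk
      have : B i k = 0 := by
        rw [hB]
        have : ¬ i = k := fun h => h2 (by rw [h])
        simp [h1, h3, this]
      simp [Matrix.neg_apply, this]
    have hiele : (i : ℕ) = (j : ℕ) ↔ i = j := (Fin.ext_iff).symm
    have hjN : (j : ℕ) < N := j.isLt
    have hiN : (i : ℕ) < N := i.isLt
    -- case split on the position of i
    rcases Nat.eq_zero_or_pos (i : ℕ) with hi0 | hipos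
    · -- i = 0
      rcases eq_or_lt_of_le (show (i : ℕ) + 1 ≤ N from i.isLt) with hlast | hint
      · -- N = 1 (i is also the last row)
        have hN1 : N = 1 := by omega
        have hj0 : (j : ℕ) = 0 := by omega
        have hij : i = j := Fin.ext (by omega)
        have huniv : (Finset.univ : Finset (Fin N)) = {i} := by
          ext k; simp [Fin.ext_iff]; omega
        rw [huniv, Finset.sum_singleton, if_pos hij]
        have hBii : B i i = -ν := by
          rw [hB]; simp [hi0, hlast]; omega
        have hJ1' : J = 1 := by omega
        rw [hMg, Matrix.neg_apply, hBii, hi0, hJ1', g1]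
        field_simp
        simp [hJ1']
      · -- N ≥ 2, i = 0 : entries at k = 0 and k = 1
        have h1N : 1 < N := by omega
        set k1 : Fin N := ⟨1, h1N⟩ with hk1
        have hselfne : i ≠ k1 := by simp [Fin.ext_iff, hk1, hi0]
        have hsub : ∑ k : Fin N, (-B) i k * M k j
            = ∑ k ∈ ({i, k1} : Finset (Fin N)), (-B) i k * M k j := by
          refine (Finset.sum_subset (Finset.subset_univ _) ?_).symm
          intro k _ hk
          refine hzero k ?_
          simp only [Finset.mem_insert, Finset.mem_singleton] at hk
          push_neg at hk
          obtain ⟨hka, hkb⟩ := hk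
          have hka' : (k : ℕ) ≠ (i : ℕ) := fun h => hka (Fin.ext h)
          have hkb' : (k : ℕ) ≠ 1 := fun h => hkb (Fin.ext (by simp [hk1, h]))
          omega
        rw [hsub, Finset.sum_insert (by simpa using hselfne), Finset.sum_singleton]
        have hBii : B i i = -(μ + ν) := by
          rw [hB]; simp [hi0]; omega
        have hBik1 : B i k1 = μ := by
          rw [hB]; simp [hk1, hi0]
        rw [hMg, hMg, Matrix.neg_apply, Matrix.neg_apply, hBii, hBik1, hi0]
        simp only [hk1]
        -- goal : (μ+ν) * ((ν^J)⁻¹ * g 1) + (-μ) * ((ν^J)⁻¹ * g 2) = if i = j then 1 else 0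
        rcases eq_or_lt_of_le hJ1 with hJeq | hJgt
        · -- J = 1, so j = 0 = i
          have hij : i = j := Fin.ext (by omega)
          rw [if_pos hij]
          have hg2 : g 2 = g 1 := gflat 1 (by omega)
          rw [hg2, g1, ← hJeq]
          field_simp
          simp only [Nat.sub_self, pow_zero, one_mul]
          ring
        · -- J ≥ 2, so j ≠ 0 = i
          have hij : ¬ i = j := by rw [← hiele]; omega
          rw [if_neg hij]
          have hg2 : g 2 = g 1 + μ ^ (J - 2) * ν ^ 1 := gstep 1 (by omega)
          rw [hg2, g1]
          have hμpow : μ ^ (J - 1) = μ * μ ^ (J - 2) := by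
            rw [← pow_succ']
            congr 1
            omega
          rw [hμpow]
          ring
    · -- i ≥ 1
      set ic : ℕ := (i : ℕ) with hic
      set km : Fin N := ⟨ic - 1, by omega⟩ with hkm
      rcases eq_or_lt_of_le (show ic + 1 ≤ N from i.isLt) with hlast | hint
      · -- last row : entries at k = i-1 and k = i
        have hkmne : km ≠ i := by simp [Fin.ext_iff, hkm]; omega
        have hsub : ∑ k : Fin N, (-B) i k * M k j
            = ∑ k ∈ ({km, i} : Finset (Fin N)), (-B) i k * M k j := by
          refine (Finset.sum_subset (Finset.subset_univ _) ?_).symm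
          intro k _ hk
          refine hzero k ?_
          simp only [Finset.mem_insert, Finset.mem_singleton] at hk
          push_neg at hk
          obtain ⟨hka, hkb⟩ := hk
          have hka' : (k : ℕ) ≠ ic - 1 := fun h => hka (Fin.ext (by simp [hkm, h]))
          have hkb' : (k : ℕ) ≠ (i : ℕ) := fun h => hkb (Fin.ext h)
          have hkN : (k : ℕ) < N := k.isLt
          omega
        rw [hsub, Finset.sum_insert (by simpa using hkmne), Finset.sum_singleton]
        have hBikm : B i km = ν := by
          rw [hB]; simp [hkm]; rw [if_neg (by omega), if_pos (by omega)]
        have hBii : B i i = -ν := by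
          rw [hB]; simp; omega
        rw [hMg, hMg, Matrix.neg_apply, Matrix.neg_apply, hBikm, hBii]
        simp only [hkm]
        have hkmval : (ic - 1) + 1 = ic := by omega
        rw [hkmval]
        -- goal : -ν * ((ν^J)⁻¹ * g ic) + ν * ((ν^J)⁻¹ * g (ic+1)) = if i=j then 1 else 0
        rcases Nat.lt_or_ge (J - 1) ic with hjlt | hjge
        · -- j < i : zero
          have hij : ¬ i = j := by rw [← hiele]; omega
          rw [if_neg hij]
          have hflat : g (ic + 1) = g ic := gflat ic (by omega)
          rw [← hic, hflat]
          ring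
        · -- j ≥ i, but j ≤ N-1 = i so j = i
          have hij : i = j := Fin.ext (by omega)
          rw [if_pos hij]
          have hJic : J = ic + 1 := by omega
          have hstep : g (ic + 1) = g ic + μ ^ (J - (ic + 1)) * ν ^ ic :=
            gstep ic (by omega)
          rw [← hic, hstep, hJic]
          simp only [Nat.sub_self, pow_zero, one_mul]
          field_simp
          ring
      · -- interior row : entries at k = i-1, i, i+1
        set kp : Fin N := ⟨ic + 1, hint⟩ with hkp
        have hkmne : km ≠ i := by simp [Fin.ext_iff, hkm]; omega
        have hkpne : kp ≠ i := by simp [Fin.ext_iff, hkp]; omega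
        have hkmkp : km ≠ kp := by simp [Fin.ext_iff, hkm, hkp]
        have hsub : ∑ k : Fin N, (-B) i k * M k j
            = ∑ k ∈ ({km, i, kp} : Finset (Fin N)), (-B) i k * M k j := by
          refine (Finset.sum_subset (Finset.subset_univ _) ?_).symm
          intro k _ hk
          refine hzero k ?_
          simp only [Finset.mem_insert, Finset.mem_singleton] at hk
          push_neg at hk
          obtain ⟨hka, hkb, hkc⟩ := hk
          have hka' : (k : ℕ) ≠ ic - 1 := fun h => hka (Fin.ext (by simp [hkm, h]))
          have hkb' : (k : ℕ) ≠ (i : ℕ) := fun h => hkb (Fin.ext h)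
          have hkc' : (k : ℕ) ≠ ic + 1 := fun h => hkc (Fin.ext (by simp [hkp, h]))
          omega
        rw [hsub]
        rw [Finset.sum_insert (by simp [hkmne, hkmkp]),
          Finset.sum_insert (by simpa using hkpne.symm), Finset.sum_singleton]
        have hBikm : B i km = ν := by
          rw [hB]; simp [hkm]; rw [if_neg (by omega), if_pos (by omega)]
        have hBii : B i i = -(μ + ν) := by
          rw [hB]; simp; omega
        have hBikp : B i kp = μ := by
          rw [hB]; simp [hkp]
          exact fun h => absurd hic h
        rw [hMg, hMg, hMg, Matrix.neg_apply, Matrix.neg_apply, Matrix.neg_apply,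
          hBikm, hBii, hBikp]
        simp only [hkm, hkp]
        have hkmval : (ic - 1) + 1 = ic := by omega
        rw [hkmval]
        -- goal : -ν * ((ν^J)⁻¹ * g ic) + (μ+ν) * ((ν^J)⁻¹ * g (ic+1))
        --        + (-μ) * ((ν^J)⁻¹ * g (ic+2)) = if i=j then 1 else 0
        rcases Nat.lt_trichotomy (ic + 1) J with hlt | heq | hgt
        · -- i < j : zero
          have hij : ¬ i = j := by rw [← hiele]; omega
          rw [if_neg hij]
          have h1 : g (ic + 1) = g ic + μ ^ (J - (ic + 1)) * ν ^ ic :=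
            gstep ic (by omega)
          have h2 : g (ic + 1 + 1) = g (ic + 1) + μ ^ (J - (ic + 2)) * ν ^ (ic + 1) :=
            gstep (ic + 1) (by omega)
          rw [h2, h1]
          have hμpow : μ ^ (J - (ic + 1)) = μ * μ ^ (J - (ic + 2)) := by
            rw [← pow_succ']
            congr 1
            omega
          rw [hμpow]
          ring
        · -- i = j
          have hij : i = j := Fin.ext (by omega)
          rw [if_pos hij]
          have h1 : g (ic + 1) = g ic + μ ^ (J - (ic + 1)) * ν ^ ic :=
            gstep ic (by omega)
          have h2 : g (ic + 1 + 1) = g (ic + 1) := gflat (ic + 1) (by omega)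
          rw [h2, h1, ← heq]
          simp only [Nat.sub_self, pow_zero, one_mul]
          field_simp
          ring
        · -- i > j : zero
          have hij : ¬ i = j := by rw [← hiele]; omega
          rw [if_neg hij]
          have h1 : g (ic + 1) = g ic := gflat ic (by omega)
          have h2 : g (ic + 1 + 1) = g (ic + 1) := gflat (ic + 1) (by omega)
          rw [h2, h1]
          ring
  exact ⟨key, (Matrix.isUnit_iff_isUnit_det _).mpr (Matrix.isUnit_det_of_right_inverse key), Matrix.inv_eq_right_inv key⟩
end

section
/- Let μ, ν > 0 be real numbers with μ ≠ ν and N ≥ 1 an integer. Let B be the N×N real matrix indexed by 1,…,N with B(i,i) = −(μ+ν) for 1 ≤ i ≤ N−1, B(N,N) = −ν, B(i,i+1) = μ for 1 ≤ i ≤ N−1, B(i,i−1) = ν for 2 ≤ i ≤ N, and all other entries 0. If t ∈ ℝ^N satisfies (−B)·t = 𝟙, where 𝟙 is the all-ones vector, then t(1) = (1/ν)·(1 − (μ/ν)^N)/(1 − μ/ν). -/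
/-- Mean ON time under Policy 1: if `t` solves `(−B)·t = 𝟙` for the matrix `B`
obtained from the birth-death generator (harvesting rate `μ`, utilization rate `ν`,
`μ ≠ ν`) by deleting state `0` (index `i : Fin N` stands for energy level `i+1`),
then the mean hitting time of level `0` from level `1` is
`t(1) = (1/ν)·(1 − (μ/ν)^N)/(1 − μ/ν)`. -/
theorem stmt_13 (μ ν : ℝ) (hμ : 0 < μ) (hν : 0 < ν) (hne : μ ≠ ν)
    (N : ℕ) (hN : 1 ≤ N)
    (B : Matrix (Fin N) (Fin N) ℝ)
    (hB : ∀ i j : Fin N,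
      B i j = if (j : ℕ) = (i : ℕ) + 1 then μ
        else if (j : ℕ) + 1 = (i : ℕ) then ν
        else if i = j then (if (i : ℕ) + 1 = N then -ν else -(μ + ν))
        else 0)
    (t : Fin N → ℝ)
    (ht : (-B).mulVec t = fun _ => 1) :
    t ⟨0, by omega⟩ = 1 / ν * ((1 - (μ / ν) ^ N) / (1 - μ / ν)) := by
  classical
  have hν0 : ν ≠ 0 := ne_of_gt hν
  set r : ℝ := μ / ν with hr
  have hr1 : r ≠ 1 := by
    intro hc
    apply hne
    rw [hr] at hc
    field_simp at hc
    exact hc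
  set T : ℕ → ℝ := fun k => if h : 0 < k ∧ k ≤ N then t ⟨k - 1, by omega⟩ else 0 with hT
  have hT0 : T 0 = 0 := by simp [hT]
  have hTk : ∀ k (h : 0 < k ∧ k ≤ N), T k = t ⟨k - 1, by omega⟩ := by
    intro k h; simp [hT, h]
  have hTt : ∀ (k : ℕ) (hk : 0 < k ∧ k ≤ N) (j : Fin N), (j : ℕ) = k - 1 → T k = t j := by
    intro k hk j hj
    rw [hTk k hk]
    congr 1
    exact Fin.ext hj.symm
  have hTbig : ∀ k, N < k → T k = 0 := by
    intro k hk; simp only [hT]; rw [dif_neg]; omega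
  have hrow : ∀ i : Fin N, ∑ j, (-(B i j)) * t j = 1 := by
    intro i
    have h := congrFun ht i
    simpa [Matrix.mulVec, dotProduct, Matrix.neg_apply] using h
  have key : ∀ i : Fin N,
      (if (i : ℕ) + 1 = N then ν else μ + ν) * T ((i : ℕ) + 1)
        - μ * T ((i : ℕ) + 2) - ν * T (i : ℕ) = 1 := by
    intro i
    have h := hrow i
    have hdec : ∀ j : Fin N, (-(B i j)) * t j =
        (if (j : ℕ) = (i : ℕ) + 1 then (-μ) * t j else 0)
        + (if (j : ℕ) + 1 = (i : ℕ) then (-ν) * t j else 0)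
        + (if i = j then (if (i : ℕ) + 1 = N then ν else μ + ν) * t j else 0) := by
      intro j
      rw [hB]
      rcases eq_or_ne i j with hij | hij
      · subst hij
        split_ifs <;> first | ring1 | (exfalso; omega) | (exfalso; simp_all)
      · have hij' : (i : ℕ) ≠ (j : ℕ) := fun hc => hij (Fin.ext hc)
        split_ifs <;> first | ring1 | (exfalso; omega) | (exfalso; simp_all)
    rw [Finset.sum_congr rfl (fun j _ => hdec j), Finset.sum_add_distrib,
      Finset.sum_add_distrib] at h
    have hS3 : (∑ j : Fin N, if i = j then (if (i : ℕ) + 1 = N then ν else μ + ν) * t j else 0)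
        = (if (i : ℕ) + 1 = N then ν else μ + ν) * t i := by
      rw [Finset.sum_ite_eq]
      simp
    have hS1 : (∑ j : Fin N, if (j : ℕ) = (i : ℕ) + 1 then (-μ) * t j else 0)
        = -(μ * T ((i : ℕ) + 2)) := by
      by_cases hlt : (i : ℕ) + 1 < N
      · have e1 : (∑ j : Fin N, if (j : ℕ) = (i : ℕ) + 1 then (-μ) * t j else 0)
            = ∑ j : Fin N, if (⟨(i : ℕ) + 1, hlt⟩ : Fin N) = j then (-μ) * t j else 0 := by
          refine Finset.sum_congr rfl fun j _ => if_congr ?_ rfl rfl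
          simp only [Fin.ext_iff]
          omega
        rw [e1, Finset.sum_ite_eq]
        simp only [Finset.mem_univ, if_true]
        rw [hTt ((i : ℕ) + 2) ⟨by omega, by omega⟩ ⟨(i : ℕ) + 1, hlt⟩ (by simp)]
        ring
      · have hiN : (i : ℕ) + 1 = N := by have := i.isLt; omega
        rw [Finset.sum_eq_zero, hTbig ((i : ℕ) + 2) (by omega)]
        · ring
        · intro j _
          rw [if_neg]
          have := j.isLt; omega
    have hS2 : (∑ j : Fin N, if (j : ℕ) + 1 = (i : ℕ) then (-ν) * t j else 0)
        = -(ν * T (i : ℕ)) := by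
      by_cases hpos : 0 < (i : ℕ)
      · have hlt : (i : ℕ) - 1 < N := by have := i.isLt; omega
        have e1 : (∑ j : Fin N, if (j : ℕ) + 1 = (i : ℕ) then (-ν) * t j else 0)
            = ∑ j : Fin N, if (⟨(i : ℕ) - 1, hlt⟩ : Fin N) = j then (-ν) * t j else 0 := by
          refine Finset.sum_congr rfl fun j _ => if_congr ?_ rfl rfl
          simp only [Fin.ext_iff]
          omega
        rw [e1, Finset.sum_ite_eq]
        simp only [Finset.mem_univ, if_true]
        rw [hTt (i : ℕ) ⟨hpos, le_of_lt i.isLt⟩ ⟨(i : ℕ) - 1, hlt⟩ (by simp)]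
        ring
      · have hi0 : (i : ℕ) = 0 := by omega
        rw [Finset.sum_eq_zero, hi0, hT0]
        · ring
        · intro j _; rw [if_neg]; omega
    rw [hS1, hS2, hS3] at h
    rw [hTt ((i : ℕ) + 1) ⟨by omega, by have := i.isLt; omega⟩ i (by omega)]
    linarith [h]
  have main : ∀ j, j < N → ν * (T (N - j) - T (N - j - 1)) =
      ∑ k ∈ Finset.range (j + 1), r ^ k := by
    intro j
    induction j with
    | zero =>
      intro _
      have h := key ⟨N - 1, by omega⟩
      simp only [show N - 1 + 1 = N from by omega,
        show N - 1 + 2 = N + 1 from by omega] at h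
      rw [if_pos (by simp), hTbig (N + 1) (by omega)] at h
      simp only [Nat.sub_zero]
      have hs : ∑ k ∈ Finset.range (0 + 1), r ^ k = 1 := by simp
      rw [hs]
      linarith
    | succ j ih =>
      intro hj
      have ihv := ih (by omega)
      have h := key ⟨N - j - 2, by omega⟩
      simp only [show N - j - 2 + 1 = N - j - 1 from by omega,
        show N - j - 2 + 2 = N - j from by omega] at h
      rw [if_neg (by omega)] at h
      rw [show N - (j + 1) - 1 = N - j - 2 from by omega,
        show N - (j + 1) = N - j - 1 from by omega]
      have hgeom : ∑ k ∈ Finset.range (j + 1 + 1), r ^ k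
          = r * ∑ k ∈ Finset.range (j + 1), r ^ k + 1 := by rw [geom_sum_succ]
      have hfs : μ / ν * (ν * (T (N - j) - T (N - j - 1)))
          = μ * (T (N - j) - T (N - j - 1)) := by field_simp
      rw [hgeom, ← ihv, hr, hfs]
      linear_combination h
  have hfin := main (N - 1) (by omega)
  rw [show N - (N - 1) - 1 = 0 from by omega, show N - (N - 1) = 1 from by omega,
    hT0, hTt 1 ⟨one_pos, hN⟩ ⟨0, by omega⟩ (by simp)] at hfin
  rw [show N - 1 + 1 = N from by omega] at hfin
  have h2 : r - 1 ≠ 0 := sub_ne_zero.mpr hr1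
  have h1 : (1 : ℝ) - r ≠ 0 := fun hc => h2 (by linarith)
  have ht0 : t ⟨0, by omega⟩ = (∑ k ∈ Finset.range N, r ^ k) / ν := by
    rw [← hfin]
    field_simp; ring
  rw [ht0, geom_sum_eq hr1 N]
  field_simp
  ring
end

section
/- Let μ, ν > 0 be real numbers with μ ≠ ν and N ≥ 1 an integer. Let B be the N×N real matrix indexed by 1,…,N with B(i,i) = −(μ+ν) for 1 ≤ i ≤ N−1, B(N,N) = −ν, B(i,i+1) = μ for 1 ≤ i ≤ N−1, B(i,i−1) = ν for 2 ≤ i ≤ N, and all other entries 0. If t ∈ ℝ^N satisfies (−B)·t = 𝟙, where 𝟙 is the all-ones vector, then t(N) = (1/(μ−ν))·(μ/ν)·(1 − (μ/ν)^N)/(1 − μ/ν) − N/(μ−ν). -/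
lemma sum_if_coe {N : ℕ} (m : ℕ) (f : Fin N → ℝ) (c : ℝ) :
    ∑ j : Fin N, (if (j:ℕ) = m then c else 0) * f j =
      if h : m < N then c * f ⟨m, h⟩ else 0 := by
  split_ifs with h
  · rw [Finset.sum_eq_single (⟨m, h⟩ : Fin N)]
    · simp
    · intro b _ hb
      rw [if_neg, zero_mul]
      exact fun hc => hb (Fin.ext hc)
    · simp
  · apply Finset.sum_eq_zero
    intro j _
    rw [if_neg, zero_mul]
    exact fun hc => h (hc ▸ j.isLt)

noncomputable def Ev {N : ℕ} (t : Fin N → ℝ) (k : ℕ) : ℝ :=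
  if h : 1 ≤ k ∧ k ≤ N then t ⟨k - 1, by omega⟩ else 0

lemma Ev_pos {N : ℕ} (t : Fin N → ℝ) (k : ℕ) (h1 : 1 ≤ k) (h2 : k ≤ N) :
    Ev t k = t ⟨k - 1, by omega⟩ := dif_pos ⟨h1, h2⟩

lemma Ev_zero {N : ℕ} (t : Fin N → ℝ) : Ev t 0 = 0 := by simp [Ev]

/-- Mean ON time under Policy 2: if `t` solves `(−B)·t = 𝟙` for the matrix `B`
obtained from the birth-death generator (harvesting rate `μ`, utilization rate `ν`,
`μ ≠ ν`) by deleting state `0` (index `i : Fin N` stands for energy level `i+1`),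
then the mean hitting time of level `0` from the full level `N` is
`t(N) = (1/(μ−ν))·(μ/ν)·(1 − (μ/ν)^N)/(1 − μ/ν) − N/(μ−ν)`. -/
theorem stmt_14 (μ ν : ℝ) (hμ : 0 < μ) (hν : 0 < ν) (hne : μ ≠ ν)
    (N : ℕ) (hN : 1 ≤ N)
    (B : Matrix (Fin N) (Fin N) ℝ)
    (hB : ∀ i j : Fin N,
      B i j = if (j : ℕ) = (i : ℕ) + 1 then μ
        else if (j : ℕ) + 1 = (i : ℕ) then ν
        else if i = j then (if (i : ℕ) + 1 = N then -ν else -(μ + ν))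
        else 0)
    (t : Fin N → ℝ)
    (ht : (-B).mulVec t = fun _ => 1) :
    t ⟨N - 1, by omega⟩ =
      1 / (μ - ν) * (μ / ν) * ((1 - (μ / ν) ^ N) / (1 - μ / ν)) - N / (μ - ν) := by
  have hν0 : ν ≠ 0 := ne_of_gt hν
  obtain ⟨r, hr⟩ : ∃ r : ℝ, r = μ / ν := ⟨_, rfl⟩
  have hμr : μ = ν * r := by rw [hr]; field_simp
  have hr1 : r ≠ 1 := by
    intro h
    rw [h, mul_one] at hμr
    exact hne hμr
  have tcongr : ∀ (a b : ℕ) (ha : a < N) (hb : b < N), a = b → t ⟨a, ha⟩ = t ⟨b, hb⟩ := by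
    intro a b ha hb h; subst h; rfl
  -- split the matrix entries
  have hsplit : ∀ i j : Fin N, (-B) i j =
      (if (j:ℕ) = (i:ℕ)+1 then -μ else 0) +
      (if (j:ℕ) = (if 1 ≤ (i:ℕ) then (i:ℕ)-1 else N) then -ν else 0) +
      (if (j:ℕ) = (i:ℕ) then (if (i:ℕ)+1 = N then ν else μ+ν) else 0) := by
    intro i j
    have hj := j.isLt
    have hi := i.isLt
    simp only [Matrix.neg_apply, hB i j, Fin.ext_iff]
    split_ifs <;> first | omega | ring
  -- the linear equations
  have heq : ∀ i : Fin N,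
      (if h : (i:ℕ)+1 < N then -μ * t ⟨(i:ℕ)+1, h⟩ else 0) +
      (if h : (if 1 ≤ (i:ℕ) then (i:ℕ)-1 else N) < N then
          -ν * t ⟨(if 1 ≤ (i:ℕ) then (i:ℕ)-1 else N), h⟩ else 0) +
      (if h : (i:ℕ) < N then (if (i:ℕ)+1 = N then ν else μ+ν) * t ⟨(i:ℕ), h⟩ else 0) = 1 := by
    intro i
    have h1 := congrFun ht i
    simp only [Matrix.mulVec, dotProduct] at h1
    calc _ = ∑ j : Fin N, (-B) i j * t j := by
            rw [← sum_if_coe ((i:ℕ)+1) t (-μ), ← sum_if_coe (if 1 ≤ (i:ℕ) then (i:ℕ)-1 else N) t (-ν),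
              ← sum_if_coe (i:ℕ) t (if (i:ℕ)+1 = N then ν else μ+ν), ← Finset.sum_add_distrib,
              ← Finset.sum_add_distrib]
            apply Finset.sum_congr rfl
            intro j _
            rw [hsplit i j]; ring
      _ = 1 := h1
  -- clean form of the equations, in terms of energy levels 1..N
  have heq2 : ∀ k : ℕ, 1 ≤ k → k ≤ N →
      (if k = N then ν else μ+ν) * Ev t k - μ * Ev t (k+1) - ν * Ev t (k-1) = 1 := by
    intro k hk1 hkN
    have h := heq ⟨k-1, by omega⟩
    simp only [Fin.val_mk] at h
    simp only [show k-1+1 = k from by omega] at h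
    rw [dif_pos (show k-1 < N by omega)] at h
    -- middle term
    have hmid : (if h : (if 1 ≤ k-1 then k-1-1 else N) < N then
        -ν * t ⟨(if 1 ≤ k-1 then k-1-1 else N), h⟩ else 0) = -ν * Ev t (k-1) := by
      rcases Nat.lt_or_ge k 2 with h2 | h2
      · have hk : k = 1 := by omega
        subst hk
        simp [Ev]
      · have h1 : 1 ≤ k - 1 := by omega
        simp only [if_pos h1]
        rw [dif_pos (show k-1-1 < N by omega), Ev_pos t (k-1) h1 (by omega)]
    rw [hmid] at h
    rw [Ev_pos t k hk1 hkN]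
    rcases eq_or_lt_of_le hkN with hkN' | hkN'
    · -- top row
      rw [dif_neg (show ¬ k < N by omega)] at h
      have hz : Ev t (k+1) = 0 := dif_neg (by omega)
      rw [hz]
      linarith
    · rw [dif_pos hkN'] at h
      rw [Ev_pos t (k+1) (by omega) (by omega),
        tcongr (k+1-1) k (by omega) (by omega) (by omega)]
      linarith
  have hrec : ∀ k : ℕ, 1 ≤ k → k < N →
      ν * (Ev t k - Ev t (k-1)) = 1 + μ * (Ev t (k+1) - Ev t k) := by
    intro k h1 h2
    have h := heq2 k h1 (le_of_lt h2)
    rw [if_neg (show ¬ k = N by omega)] at h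
    linarith
  have hTop : ν * (Ev t N - Ev t (N-1)) = 1 := by
    have h := heq2 N hN le_rfl
    rw [if_pos rfl] at h
    have hz : Ev t (N+1) = 0 := dif_neg (by omega)
    rw [hz] at h
    linarith
  -- closed form for differences, by induction
  have hd : ∀ m : ℕ, m ≤ N - 1 →
      Ev t (N - m) - Ev t (N - m - 1) = (1/ν) * ∑ j ∈ Finset.range (m+1), r ^ j := by
    intro m
    induction m with
    | zero =>
      intro _
      simp only [Nat.sub_zero, zero_add, Finset.range_one, Finset.sum_singleton, pow_zero, mul_one]
      field_simp
      linarith [hTop]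
    | succ m ih =>
      intro hm
      have hIH := ih (by omega)
      have hrec' := hrec (N-m-1) (by omega) (by omega)
      rw [show N-m-1+1 = N-m by omega, hIH] at hrec'
      have hgs2 : ∑ j ∈ Finset.range (m+1+1), r ^ j
          = r * ∑ j ∈ Finset.range (m+1), r ^ j + 1 := geom_sum_succ
      rw [show N-(m+1) = N-m-1 by omega]
      apply mul_left_cancel₀ hν0
      rw [hrec', hgs2, hμr]
      field_simp
      ring
  -- telescoping
  have hsum : ∀ m : ℕ, m ≤ N →
      Ev t N - Ev t (N - m) = ∑ i ∈ Finset.range m, (Ev t (N - i) - Ev t (N - i - 1)) := by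
    intro m
    induction m with
    | zero => intro _; simp
    | succ m ih =>
      intro hm
      rw [Finset.sum_range_succ, ← ih (by omega), show N-(m+1) = N-m-1 by omega]
      ring
  have hEN : Ev t N = (1/ν) * ∑ i ∈ Finset.range N, ∑ j ∈ Finset.range (i+1), r ^ j := by
    have h := hsum N le_rfl
    rw [Nat.sub_self, Ev_zero, sub_zero] at h
    rw [h, Finset.mul_sum]
    apply Finset.sum_congr rfl
    intro i hi
    rw [Finset.mem_range] at hi
    exact hd i (by omega)
  -- final algebra
  have hkey : t ⟨N - 1, by omega⟩ = Ev t N := (Ev_pos t N hN le_rfl).symm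
  rw [hkey, hEN, ← hr]
  have hr1' : r - 1 ≠ 0 := sub_ne_zero.mpr hr1
  have h1r : 1 - r ≠ 0 := sub_ne_zero.mpr (Ne.symm hr1)
  have hμν : μ - ν = ν * (r - 1) := by rw [hμr]; ring
  have hgs : ∀ n : ℕ, ∑ j ∈ Finset.range n, r ^ j = (r ^ n - 1) / (r - 1) :=
    fun n => geom_sum_eq hr1 n
  have hss : ∑ i ∈ Finset.range N, ∑ j ∈ Finset.range (i+1), r ^ j
      = (r * ((r ^ N - 1) / (r - 1)) - N) / (r - 1) := by
    calc ∑ i ∈ Finset.range N, ∑ j ∈ Finset.range (i+1), r ^ j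
        = ∑ i ∈ Finset.range N, (r * r ^ i - 1) / (r - 1) := by
          apply Finset.sum_congr rfl
          intro i _
          rw [hgs (i+1), pow_succ, mul_comm (r ^ i) r]
      _ = (∑ i ∈ Finset.range N, (r * r ^ i - 1)) / (r - 1) := by
          rw [Finset.sum_div]
      _ = (r * ∑ i ∈ Finset.range N, r ^ i - N) / (r - 1) := by
          rw [Finset.sum_sub_distrib, ← Finset.mul_sum]
          simp
      _ = (r * ((r ^ N - 1) / (r - 1)) - N) / (r - 1) := by rw [hgs N]
  rw [hss, hμν]
  field_simp
  ring
end

section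
/- Let μ, ν > 0 be real numbers and N ≥ 1 an integer. Let B be the N×N real matrix indexed by 1,…,N with B(i,i) = −(μ+ν) for 1 ≤ i ≤ N−1, B(N,N) = −ν, B(i,i+1) = μ for 1 ≤ i ≤ N−1, B(i,i−1) = ν for 2 ≤ i ≤ N, and all other entries 0. If t ∈ ℝ^N satisfies (−B)·t = 𝟙, then t(i)/i < t(1) for every integer i with 2 ≤ i ≤ N; that is, the maximum of t(i)/i over 1 ≤ i ≤ N is attained uniquely at i = 1. -/
lemma aux_sum_eq (N : ℕ) (f : Fin N → ℝ) (k : ℕ) :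
    (∑ j : Fin N, if (j : ℕ) = k then f j else 0)
      = if h : k < N then f ⟨k, h⟩ else 0 := by
  split_ifs with h
  · calc (∑ j : Fin N, if (j : ℕ) = k then f j else 0)
        = ∑ j : Fin N, if j = ⟨k, h⟩ then f j else 0 := by
          apply Finset.sum_congr rfl
          intro j _
          congr 1
          simp [Fin.ext_iff]
      _ = f ⟨k, h⟩ := by simp
  · apply Finset.sum_eq_zero
    intro j _
    rw [if_neg]
    have := j.isLt
    omega

lemma aux_key (μ ν : ℝ) (N : ℕ)
    (B : Matrix (Fin N) (Fin N) ℝ)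
    (hB : ∀ i j : Fin N,
      B i j = if (j : ℕ) = (i : ℕ) + 1 then μ
        else if (j : ℕ) + 1 = (i : ℕ) then ν
        else if i = j then (if (i : ℕ) + 1 = N then -ν else -(μ + ν))
        else 0)
    (t : Fin N → ℝ)
    (ht : (-B).mulVec t = fun _ => 1)
    (k : ℕ) (hk : k < N) :
    (if k + 1 = N then ν else μ + ν) * t ⟨k, hk⟩
      - (if h : k + 1 < N then μ * t ⟨k + 1, h⟩ else 0)
      - (if h : 0 < k then ν * t ⟨k - 1, by omega⟩ else 0) = 1 := by
  have h0 : (∑ j : Fin N, -B ⟨k, hk⟩ j * t j) = 1 := congrFun ht ⟨k, hk⟩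
  have hsplit : ∀ j : Fin N, -B ⟨k, hk⟩ j * t j =
      (if (j : ℕ) = k + 1 then -μ * t j else 0)
      + (if (j : ℕ) = k - 1 then (if 0 < k then -ν * t j else 0) else 0)
      + (if (j : ℕ) = k then (if k + 1 = N then ν else μ + ν) * t j else 0) := by
    intro j
    rw [hB]
    simp only [Fin.ext_iff, Fin.val_mk]
    split_ifs <;> first | ring1 | (exfalso; omega)
  rw [Finset.sum_congr rfl (fun j _ => hsplit j)] at h0
  rw [Finset.sum_add_distrib, Finset.sum_add_distrib] at h0
  rw [aux_sum_eq, aux_sum_eq, aux_sum_eq, dif_pos hk,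
    dif_pos (show k - 1 < N by omega)] at h0
  by_cases h1 : k + 1 < N <;> by_cases h2 : 0 < k <;>
    simp only [h1, h2, dif_pos, dif_neg, not_false_iff, if_pos, if_neg,
      not_lt, dite_true, dite_false, if_true, if_false] at h0 ⊢ <;>
    linarith


lemma aux_main (μ ν : ℝ) (N : ℕ) (hμ : 0 < μ) (hν : 0 < ν) (hN : 1 ≤ N)
    (t : Fin N → ℝ)
    (key : ∀ (k : ℕ) (hk : k < N),
      (if k + 1 = N then ν else μ + ν) * t ⟨k, hk⟩
        - (if h : k + 1 < N then μ * t ⟨k + 1, h⟩ else 0)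
        - (if h : 0 < k then ν * t ⟨k - 1, by omega⟩ else 0) = 1) :
    ∀ i : ℕ, ∀ _ : 2 ≤ i, ∀ _ : i ≤ N,
      t ⟨i - 1, Nat.lt_of_lt_of_le (Nat.sub_lt (by omega) Nat.one_pos) ‹i ≤ N›⟩ / (i : ℝ)
        < t ⟨0, Nat.lt_of_lt_of_le Nat.zero_lt_one hN⟩ := by
  set s : ℕ → ℝ := fun k => if h : k < N then t ⟨k, h⟩ else 0 with hs
  have hsval : ∀ (k : ℕ) (hk : k < N), s k = t ⟨k, hk⟩ := fun k hk => dif_pos hk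
  set d : ℕ → ℝ := fun k => Nat.rec (s 0) (fun n _ => s (n + 1) - s n) k with hdd
  have hd0 : d 0 = s 0 := rfl
  have hdsucc : ∀ k, d (k + 1) = s (k + 1) - s k := fun k => rfl
  have keyS : ∀ k, k < N →
      (if k + 1 = N then ν else μ + ν) * s k - μ * s (k + 1)
        - (if 0 < k then ν * s (k - 1) else 0) = 1 := by
    intro k hk
    have h := key k hk
    rw [hsval k hk]
    by_cases h1 : k + 1 < N <;> by_cases h2 : 0 < k <;>
      simp only [h1, h2, hs, dif_pos, dif_neg, not_false_iff, if_pos, if_neg, not_lt] at h ⊢ <;>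
      · split_ifs at h ⊢ <;> first | linarith | omega
  -- last equation
  have hdN : ν * d (N - 1) = 1 := by
    have h := keyS (N - 1) (by omega)
    have e1 : N - 1 + 1 = N := by omega
    rw [if_pos e1, e1] at h
    have hsN : s N = 0 := dif_neg (by omega)
    rcases Nat.eq_zero_or_pos (N - 1) with hN1 | h2
    · rw [if_neg (by omega)] at h
      rw [hN1, hd0]
      rw [hN1, hsN] at h; linarith
    · rw [if_pos h2] at h
      obtain ⟨m, hm⟩ : ∃ m, N - 1 = m + 1 := ⟨N - 2, by omega⟩
      rw [hm, hdsucc]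
      rw [hsN] at h
      have : m = N - 1 - 1 := by omega
      rw [hm] at h
      simp only [Nat.add_sub_cancel] at h
      linarith
  -- interior equations
  have hd : ∀ k, k + 1 ≤ N - 1 → ν * d k - μ * d (k + 1) = 1 := by
    intro k hk
    have h := keyS k (by omega)
    rw [if_neg (by omega : ¬ k + 1 = N)] at h
    rw [hdsucc k]
    rcases Nat.eq_zero_or_pos k with hk0 | h2
    · subst hk0
      rw [if_neg (by omega)] at h
      rw [hd0]; linarith
    · rw [if_pos h2] at h
      obtain ⟨m, hm⟩ : ∃ m, k = m + 1 := ⟨k - 1, by omega⟩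
      subst hm
      rw [hdsucc]
      simp only [Nat.add_sub_cancel] at h
      linarith
  -- monotonicity by downward induction
  have hmono : ∀ m, m ≤ N - 1 →
      0 < d (N - 1 - m) ∧ (1 ≤ m → d (N - m) < d (N - 1 - m)) := by
    intro m
    induction m with
    | zero =>
      intro _
      refine ⟨?_, by omega⟩
      simp only [Nat.sub_zero]
      nlinarith [hdN]
    | succ n ih =>
      intro hm
      obtain ⟨ih1, ih2⟩ := ih (by omega)
      set k := N - 1 - (n + 1) with hkdef
      have ek1 : N - 1 - n = k + 1 := by omega
      have eNk : N - (n + 1) = k + 1 := by omega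
      rw [ek1] at ih1 ih2
      have hrec : ν * d k - μ * d (k + 1) = 1 := hd k (by omega)
      have hpos : 0 < d k := by nlinarith
      refine ⟨hpos, fun _ => ?_⟩
      rw [eNk]
      by_cases hn : 1 ≤ n
      · have hrec2 : ν * d (k + 1) - μ * d (k + 2) = 1 := hd (k + 1) (by omega)
        have elt : d (k + 2) < d (k + 1) := by
          have := ih2 hn
          have e2 : N - n = k + 2 := by omega
          rwa [e2] at this
        nlinarith
      · have hn0 : n = 0 := by omega
        have ekN : k + 1 = N - 1 := by omega
        rw [ekN] at hrec ⊢
        nlinarith [hdN]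
  -- d j < d 0 for 1 ≤ j ≤ N - 1
  have hlt : ∀ j, 1 ≤ j → j ≤ N - 1 → d j < d 0 := by
    intro j
    induction j with
    | zero => omega
    | succ n ih =>
      intro _ hj
      by_cases hn : 1 ≤ n
      · have h1 : d (n + 1) < d n := by
          have := (hmono (N - 1 - n) (by omega)).2 (by omega)
          have e1 : N - 1 - (N - 1 - n) = n := by omega
          have e2 : N - (N - 1 - n) = n + 1 := by omega
          rwa [e1, e2] at this
        have h2 : d n < d 0 := ih hn (by omega)
        linarith
      · have hn0 : n = 0 := by omega
        subst hn0
        have := (hmono (N - 1) (by omega)).2 (by omega)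
        have e1 : N - 1 - (N - 1) = 0 := by omega
        have e2 : N - (N - 1) = 1 := by omega
        rwa [e1, e2] at this
  -- telescoping
  have htel : ∀ k, k < N → s k = ∑ j ∈ Finset.range (k + 1), d j := by
    intro k
    induction k with
    | zero => intro _; simp [hd0]
    | succ n ih =>
      intro hk
      rw [Finset.sum_range_succ, ← ih (by omega), hdsucc]
      ring
  -- conclusion
  intro i hi2 hiN
  have hi1 : i - 1 < N := by omega
  have h0N : 0 < N := by omega
  rw [div_lt_iff₀ (by positivity : (0:ℝ) < (i : ℝ))]
  have ht0 : t ⟨0, h0N⟩ = d 0 := by rw [hd0, hsval 0 h0N]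
  have hti : t ⟨i - 1, hi1⟩ = ∑ j ∈ Finset.range i, d j := by
    rw [← hsval (i - 1) hi1, htel (i - 1) hi1]
    have e : i - 1 + 1 = i := by omega
    rw [e]
  rw [ht0, hti]
  have hsumlt : ∑ j ∈ Finset.range i, d j < ∑ j ∈ Finset.range i, d 0 := by
    apply Finset.sum_lt_sum
    · intro j hj
      simp only [Finset.mem_range] at hj
      rcases Nat.eq_zero_or_pos j with h | h
      · subst h; exact le_refl _
      · exact le_of_lt (hlt j h (by omega))
    · exact ⟨1, Finset.mem_range.mpr (by omega), hlt 1 le_rfl (by omega)⟩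
  have hconst : ∑ j ∈ Finset.range i, d 0 = (i : ℝ) * d 0 := by
    rw [Finset.sum_const, Finset.card_range, nsmul_eq_mul]
  calc (∑ j ∈ Finset.range i, d j) < (i : ℝ) * d 0 := hconst ▸ hsumlt
    _ = d 0 * (i : ℝ) := by ring


/-- Core of Theorem 3: if `t` solves `(−B)·t = 𝟙` for the matrix `B` obtained from
the birth-death generator (harvesting rate `μ`, utilization rate `ν`) by deleting
state `0` (index `i : Fin N` stands for energy level `i+1`), so that `t(i)` is the
mean ON time starting from energy level `i`, then `t(i)/i < t(1)` for every
`2 ≤ i ≤ N`: the maximum of `t(i)/i` is attained uniquely at `i = 1`. -/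
theorem stmt_15 (μ ν : ℝ) (hμ : 0 < μ) (hν : 0 < ν) (N : ℕ) (hN : 1 ≤ N)
    (B : Matrix (Fin N) (Fin N) ℝ)
    (hB : ∀ i j : Fin N,
      B i j = if (j : ℕ) = (i : ℕ) + 1 then μ
        else if (j : ℕ) + 1 = (i : ℕ) then ν
        else if i = j then (if (i : ℕ) + 1 = N then -ν else -(μ + ν))
        else 0)
    (t : Fin N → ℝ)
    (ht : (-B).mulVec t = fun _ => 1) :
    ∀ i : ℕ, ∀ _ : 2 ≤ i, ∀ _ : i ≤ N,
      t ⟨i - 1, by omega⟩ / (i : ℝ) < t ⟨0, by omega⟩ := by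
  exact aux_main μ ν N hμ hν hN t (aux_key μ ν N B hB t ht)
end
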